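/- arXiv:2209.00594 — 5 statements merged into one kernel-verified Lean document; each statement's English description precedes it below -/
import Mathlib

section
/- Let G be a finite simple graph and let a, b, c ∈ V(G) be three distinct vertices. If for every vertex v ∈ V(G) at least two of a, b, c lie in a common connected component of G − v, then G contains an {a,b,c}-rooted K_3-minor. -/
open SimpleGraph

/-- Two vertex sets are adjacent if some edge of `G` has one endpoint in each. -/
def SetsAdjacent {V : Type*} (G : SimpleGraph V) (X Y : Set V) : Prop :=
  ∃ x ∈ X, ∃ y ∈ Y, G.Adj x y

/-- `B : Fin t → Set V` are the branch-sets of a `K_t`-minor in `G`: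
pairwise disjoint nonempty sets, each inducing a connected subgraph,
and pairwise adjacent. -/
def IsKMinor {V : Type*} (G : SimpleGraph V) (t : ℕ) (B : Fin t → Set V) : Prop :=
  (∀ i, (B i).Nonempty) ∧
  (∀ i j, i ≠ j → Disjoint (B i) (B j)) ∧
  (∀ i, (G.induce (B i)).Connected) ∧
  (∀ i j, i ≠ j → SetsAdjacent G (B i) (B j))

/-- A separation of `G`: `A ∪ B = V(G)`, both sides have a private vertex, and
no edge joins `A ∖ B` to `B ∖ A`. -/
def IsSeparation {V : Type*} (G : SimpleGraph V) (A B : Set V) : Prop :=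
  A ∪ B = Set.univ ∧ (A \ B).Nonempty ∧ (B \ A).Nonempty ∧
  ∀ a ∈ A \ B, ∀ b ∈ B \ A, ¬ G.Adj a b

section AuxRootedK3
variable {V : Type*} {G : SimpleGraph V}

/-- Connectivity within a set `S`: a walk whose whole support lies in `S`. -/
def ConnIn (G : SimpleGraph V) (S : Set V) (x y : V) : Prop :=
  ∃ p : G.Walk x y, ∀ z ∈ p.support, z ∈ S

namespace ConnIn

theorem refl {S : Set V} {x : V} (hx : x ∈ S) : ConnIn G S x x :=
  ⟨SimpleGraph.Walk.nil, by simp [hx]⟩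

theorem left_mem {S : Set V} {x y : V} (h : ConnIn G S x y) : x ∈ S := by
  obtain ⟨p, hp⟩ := h; exact hp x p.start_mem_support

theorem right_mem {S : Set V} {x y : V} (h : ConnIn G S x y) : y ∈ S := by
  obtain ⟨p, hp⟩ := h; exact hp y p.end_mem_support

theorem symm {S : Set V} {x y : V} (h : ConnIn G S x y) : ConnIn G S y x := by
  obtain ⟨p, hp⟩ := h
  refine ⟨p.reverse, fun z hz => ?_⟩
  rw [SimpleGraph.Walk.support_reverse] at hz
  exact hp z (List.mem_reverse.mp hz)

theorem trans {S : Set V} {x y z : V} (h : ConnIn G S x y) (h' : ConnIn G S y z) :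
    ConnIn G S x z := by
  obtain ⟨p, hp⟩ := h; obtain ⟨q, hq⟩ := h'
  refine ⟨p.append q, ?_⟩
  intro w hw
  rw [SimpleGraph.Walk.mem_support_append_iff] at hw
  rcases hw with hw | hw
  · exact hp w hw
  · exact hq w hw

theorem mono {S T : Set V} {x y : V} (hST : S ⊆ T) (h : ConnIn G S x y) :
    ConnIn G T x y := by
  obtain ⟨p, hp⟩ := h; exact ⟨p, fun z hz => hST (hp z hz)⟩

theorem of_adj {S : Set V} {x y : V} (h : G.Adj x y) (hx : x ∈ S) (hy : y ∈ S) :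
    ConnIn G S x y :=
  ⟨SimpleGraph.Walk.cons h SimpleGraph.Walk.nil, by
    intro z hz
    simp only [SimpleGraph.Walk.support_cons, SimpleGraph.Walk.support_nil,
      List.mem_cons, List.not_mem_nil, or_false] at hz
    rcases hz with rfl | rfl
    · exact hx
    · exact hy⟩

end ConnIn

/-- From a walk inside `S`, with `x ∉ R`: either the walk avoids `R` entirely, or there is
a first vertex of `R` hit by the walk. -/
theorem connIn_elim_first {S R : Set V} {x y : V} (p : G.Walk x y) :
    (∀ z ∈ p.support, z ∈ S) → x ∉ R →
    (ConnIn G (S \ R) x y ∨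
      ∃ h ∈ R, ∃ z, ConnIn G (S \ R) x z ∧ G.Adj z h ∧
        ∃ q : G.Walk h y, (∀ w ∈ q.support, w ∈ S) ∧ q.length < p.length) := by
  induction p with
  | nil =>
    intro hp hx
    exact Or.inl (ConnIn.refl ⟨hp _ (by simp), hx⟩)
  | @cons x w y hadj q ih =>
    intro hp hx
    by_cases hw : w ∈ R
    · refine Or.inr ⟨w, hw, x, ConnIn.refl ⟨hp x (by simp), hx⟩, hadj, q, ?_, by simp⟩
      intro z hz; exact hp z (by simp [hz])
    · have hq : ∀ z ∈ q.support, z ∈ S := fun z hz => hp z (by simp [hz])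
      rcases ih hq hw with hc | ⟨h, hh, z, hcz, hzadj, r, hr, hlen⟩
      · left
        exact ConnIn.trans (ConnIn.of_adj hadj ⟨hp x (by simp), hx⟩ ⟨hq w (by simp), hw⟩) hc
      · refine Or.inr ⟨h, hh, z,
          ConnIn.trans (ConnIn.of_adj hadj ⟨hp x (by simp), hx⟩ ⟨hq w (by simp), hw⟩) hcz,
          hzadj, r, hr, ?_⟩
        simp only [SimpleGraph.Walk.length_cons]; omega

/-- Every support vertex of a walk is reachable from the start by a sub-walk. -/
theorem walk_prefix {x y : V} (p : G.Walk x y) {w : V} (hw : w ∈ p.support) :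
    ∃ t : G.Walk x w, t.support ⊆ p.support := by
  classical
  exact ⟨p.takeUntil w hw, p.support_takeUntil_subset hw⟩

theorem connIn_to_support {S : Set V} {x y : V} (p : G.Walk x y)
    (hp : ∀ z ∈ p.support, z ∈ S) {w : V} (hw : w ∈ p.support) : ConnIn G S x w := by
  obtain ⟨t, ht⟩ := walk_prefix p hw
  exact ⟨t, fun z hz => hp z (ht hz)⟩

/-- Restrict a `ConnIn` witness into the "component" of its start. -/
theorem ConnIn.restrict {S A : Set V} {x y : V} (h : ConnIn G S x y)
    (hA : ∀ w, ConnIn G S x w → w ∈ A) : ConnIn G A x y := by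
  obtain ⟨p, hp⟩ := h
  exact ⟨p, fun z hz => hA z (connIn_to_support p hp hz)⟩

/-- A walk from outside `T` that meets `T` has an entering edge. -/
theorem walk_entry {T : Set V} {x y : V} (p : G.Walk x y) :
    x ∉ T → (∃ w ∈ p.support, w ∈ T) →
    ∃ s t, G.Adj s t ∧ s ∈ p.support ∧ s ∉ T ∧ t ∈ T := by
  induction p with
  | nil =>
    intro hx hw
    obtain ⟨w, hw1, hw2⟩ := hw
    simp only [SimpleGraph.Walk.support_nil, List.mem_singleton] at hw1
    subst hw1; exact absurd hw2 hx
  | @cons x w y hadj q ih =>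
    intro hx hw
    by_cases hwT : w ∈ T
    · exact ⟨x, w, hadj, by simp, hx, hwT⟩
    · obtain ⟨z, hz1, hz2⟩ := hw
      simp only [SimpleGraph.Walk.support_cons, List.mem_cons] at hz1
      rcases hz1 with rfl | hz1
      · exact absurd hz2 hx
      · obtain ⟨s, t, h1, h2, h3, h4⟩ := ih hwT ⟨z, hz1, hz2⟩
        exact ⟨s, t, h1, by simp [h2], h3, h4⟩

/-- Split a walk at the first vertex satisfying `P`. -/
theorem walk_first_split {x y : V} (p : G.Walk x y) (P : V → Prop) :
    (∃ z ∈ p.support, P z) →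
    ∃ z, ∃ t : G.Walk x z, ∃ d : G.Walk z y,
      P z ∧ (∀ w ∈ t.support, P w → w = z) ∧ t.append d = p := by
  induction p with
  | nil =>
    intro h
    obtain ⟨z, hz1, hz2⟩ := h
    simp only [SimpleGraph.Walk.support_nil, List.mem_singleton] at hz1
    subst hz1
    exact ⟨z, SimpleGraph.Walk.nil, SimpleGraph.Walk.nil, hz2, by simp, rfl⟩
  | @cons x w y hadj q ih =>
    intro h
    by_cases hPx : P x
    · exact ⟨x, SimpleGraph.Walk.nil, SimpleGraph.Walk.cons hadj q, hPx, by simp, rfl⟩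
    · obtain ⟨z, hz1, hz2⟩ := h
      simp only [SimpleGraph.Walk.support_cons, List.mem_cons] at hz1
      rcases hz1 with rfl | hz1
      · exact absurd hz2 hPx
      · obtain ⟨z', t, d, h1, h2, h3⟩ := ih ⟨z, hz1, hz2⟩
        refine ⟨z', SimpleGraph.Walk.cons hadj t, d, h1, ?_, by simp [h3]⟩
        intro u hu hPu
        simp only [SimpleGraph.Walk.support_cons, List.mem_cons] at hu
        rcases hu with rfl | hu
        · exact absurd hPu hPx
        · exact h2 u hu hPu

/-- A `ConnIn` within a two-element set between distinct vertices yields an edge. -/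
theorem connIn_adj_pair {S : Set V} {x y : V} (h : ConnIn G S x y) (hxy : x ≠ y)
    (hS : S ⊆ {x, y}) : G.Adj x y := by
  obtain ⟨p, hp⟩ := h
  cases p with
  | nil => exact absurd rfl hxy
  | @cons _ w _ hadj q =>
    have hw : w ∈ S := hp w (by simp)
    rcases hS hw with rfl | hw2
    · exact absurd rfl hadj.ne'
    · simp only [Set.mem_singleton_iff] at hw2
      subst hw2; exact hadj

theorem SetsAdjacent.symm {X Y : Set V} (h : SetsAdjacent G X Y) : SetsAdjacent G Y X := by
  obtain ⟨x, hx, y, hy, hxy⟩ := h; exact ⟨y, hy, x, hx, hxy.symm⟩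

/-- The symmetric statement of existence of an `{a,b,c}`-rooted `K₃`-minor. -/
def RootedK3 (G : SimpleGraph V) (a b c : V) : Prop :=
  ∃ Ba Bb Bc : Set V, a ∈ Ba ∧ b ∈ Bb ∧ c ∈ Bc ∧
    Disjoint Ba Bb ∧ Disjoint Ba Bc ∧ Disjoint Bb Bc ∧
    (∀ x ∈ Ba, ConnIn G Ba a x) ∧ (∀ x ∈ Bb, ConnIn G Bb b x) ∧
    (∀ x ∈ Bc, ConnIn G Bc c x) ∧
    SetsAdjacent G Ba Bb ∧ SetsAdjacent G Ba Bc ∧ SetsAdjacent G Bb Bc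

theorem RootedK3.swap12 {a b c : V} (h : RootedK3 G a b c) : RootedK3 G b a c := by
  obtain ⟨Ba, Bb, Bc, h1, h2, h3, d12, d13, d23, c1, c2, c3, a12, a13, a23⟩ := h
  exact ⟨Bb, Ba, Bc, h2, h1, h3, d12.symm, d23, d13, c2, c1, c3, a12.symm, a23, a13⟩

theorem RootedK3.swap23 {a b c : V} (h : RootedK3 G a b c) : RootedK3 G a c b := by
  obtain ⟨Ba, Bb, Bc, h1, h2, h3, d12, d13, d23, c1, c2, c3, a12, a13, a23⟩ := h
  exact ⟨Ba, Bc, Bb, h1, h3, h2, d13, d12, d23.symm, c1, c3, c2, a13, a12, a23.symm⟩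

theorem RootedK3.cycle {a b c : V} (h : RootedK3 G a b c) : RootedK3 G b c a :=
  h.swap12.swap23

theorem walk_to_induce_reach {B : Set V} :
    ∀ {s t : V} (p : G.Walk s t) (hp : ∀ z ∈ p.support, z ∈ B),
      (G.induce B).Reachable ⟨s, hp s p.start_mem_support⟩ ⟨t, hp t p.end_mem_support⟩ := by
  intro s t p
  induction p with
  | nil => intro hp; rfl
  | @cons x w y hadj q ih =>
    intro hp
    have hq : ∀ z ∈ q.support, z ∈ B := fun z hz => hp z (by simp [hz])
    refine Reachable.trans (Adj.reachable ?_) (ih hq)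
    exact hadj

theorem setConn_induce_connected {B : Set V} {r : V} (hr : r ∈ B)
    (h : ∀ x ∈ B, ConnIn G B r x) : (G.induce B).Connected := by
  rw [SimpleGraph.connected_iff]
  refine ⟨?_, ⟨⟨r, hr⟩⟩⟩
  rintro ⟨x, hx⟩ ⟨y, hy⟩
  obtain ⟨p, hp⟩ := h x hx
  obtain ⟨q, hq⟩ := h y hy
  exact Reachable.trans (walk_to_induce_reach p hp).symm (walk_to_induce_reach q hq)

/-- Convert the symmetric rooted-K3 statement into the required minor form. -/
theorem RootedK3.toMinor {a b c : V} (h : RootedK3 G a b c) :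
    ∃ B : Fin 3 → Set V, IsKMinor G 3 B ∧
      ∀ i, (B i ∩ ({a, b, c} : Set V)).Nonempty := by
  obtain ⟨Ba, Bb, Bc, h1, h2, h3, d12, d13, d23, c1, c2, c3, a12, a13, a23⟩ := h
  refine ⟨![Ba, Bb, Bc], ⟨?_, ?_, ?_, ?_⟩, ?_⟩
  · intro i; fin_cases i
    · exact ⟨a, h1⟩
    · exact ⟨b, h2⟩
    · exact ⟨c, h3⟩
  · intro i j hij; fin_cases i <;> fin_cases j <;>
      first
        | exact absurd rfl hij
        | simpa using d12
        | simpa using d13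
        | simpa using d23
        | simpa using d12.symm
        | simpa using d13.symm
        | simpa using d23.symm
  · intro i; fin_cases i
    · exact setConn_induce_connected h1 c1
    · exact setConn_induce_connected h2 c2
    · exact setConn_induce_connected h3 c3
  · intro i j hij; fin_cases i <;> fin_cases j <;>
      first
        | exact absurd rfl hij
        | simpa using a12
        | simpa using a13
        | simpa using a23
        | simpa using a12.symm
        | simpa using a13.symm
        | simpa using a23.symm
  · intro i; fin_cases i
    · exact ⟨a, by simpa using h1, by simp⟩
    · exact ⟨b, by simpa using h2, by simp⟩
    · exact ⟨c, by simpa using h3, by simp⟩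

theorem walk_support_conn {x y : V} (p : G.Walk x y) :
    ∀ u ∈ p.support, ∀ v ∈ p.support, ConnIn G {z | z ∈ p.support} u v :=
  fun u hu v hv =>
    ConnIn.trans (ConnIn.symm (connIn_to_support p (fun _ hz => hz) hu))
      (connIn_to_support p (fun _ hz => hz) hv)

/-- Conclusion of the core splitting lemma. -/
def CoreOut (G : SimpleGraph V) (H N₁ N₂ : Set V) (k : V) : Prop :=
  ∃ T X Y : Set V, T ⊆ H ∧ X ⊆ H \ {k} ∧ Y ⊆ H \ {k} ∧
    k ∈ T ∧ (∀ t ∈ T, ConnIn G T k t) ∧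
    Disjoint T X ∧ Disjoint T Y ∧ Disjoint X Y ∧
    (∀ x ∈ X, ∀ y ∈ X, ConnIn G X x y) ∧ (∀ x ∈ Y, ∀ y ∈ Y, ConnIn G Y x y) ∧
    (X.Nonempty → (X ∩ N₁).Nonempty) ∧ (Y.Nonempty → (Y ∩ N₂).Nonempty) ∧
    ((T ∩ N₁).Nonempty ∨ ∃ t ∈ T, ∃ x ∈ X, G.Adj t x) ∧
    ((T ∩ N₂).Nonempty ∨ ∃ t ∈ T, ∃ y ∈ Y, G.Adj t y) ∧
    ((∃ x ∈ X, ∃ y ∈ Y, G.Adj x y) ∨ (X ∩ N₂).Nonempty ∨ (Y ∩ N₁).Nonempty)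

theorem core_aux [Fintype V] {H N₁ N₂ : Set V} {k : V}
    (hk : k ∈ H) (hH : ∀ z ∈ H, ConnIn G H k z)
    (trich : ∀ h ∈ H, h ≠ k →
      (∃ z ∈ N₁, ConnIn G (H \ {h}) k z) ∨ (∃ z ∈ N₂, ConnIn G (H \ {h}) k z) ∨
      (∃ m₁ ∈ N₁, ∃ m₂ ∈ N₂, ConnIn G ((H \ {k}) \ {h}) m₁ m₂)) :
    ∀ (n : ℕ) {m₁ m₂ : V} (q : G.Walk m₁ m₂), q.IsPath →
      m₁ ∈ N₁ → m₂ ∈ N₂ → (∀ z ∈ q.support, z ∈ H \ {k}) →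
      (H \ {z | ConnIn G (H \ {w | w ∈ q.support}) k z}).ncard ≤ n →
      CoreOut G H N₁ N₂ k := by
  intro n
  induction n with
  | zero =>
    intro m₁ m₂ q _ _ _ hsupp hcard
    exfalso
    have hm₁ : m₁ ∈ H \ {z | ConnIn G (H \ {w | w ∈ q.support}) k z} := by
      refine ⟨(hsupp m₁ q.start_mem_support).1, fun hc => ?_⟩
      exact hc.right_mem.2 q.start_mem_support
    have : 0 < (H \ {z | ConnIn G (H \ {w | w ∈ q.support}) k z}).ncard :=
      (Set.ncard_pos (Set.toFinite _)).mpr ⟨m₁, hm₁⟩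
    omega
  | succ n ih =>
    intro m₁ m₂ q hq hm₁ hm₂ hsupp hcard
    classical
    set M : Set V := {w | w ∈ q.support} with hMdef
    set T : Set V := {z | ConnIn G (H \ M) k z} with hTdef
    have hsuppH : ∀ z ∈ q.support, z ∈ H := fun z hz => (hsupp z hz).1
    have hkM : k ∉ M := fun hkM => (hsupp k hkM).2 rfl
    have hTH : T ⊆ H := fun z hz => hz.right_mem.1
    have hTM : ∀ z ∈ T, z ∉ M := fun z hz => hz.right_mem.2
    have hkT : k ∈ T := ConnIn.refl ⟨hk, hkM⟩
    have hTconn : ∀ t ∈ T, ConnIn G T k t := fun t ht => ht.restrict (fun w hw => hw)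
    have hclose : ∀ s ∈ T, ∀ w, G.Adj s w → w ∈ H → w ∉ M → w ∈ T :=
      fun s hs w hadj hwH hwM => ConnIn.trans hs (ConnIn.of_adj hadj hs.right_mem ⟨hwH, hwM⟩)
    have hattach : ∃ z ∈ q.support, ∃ t ∈ T, G.Adj t z := by
      obtain ⟨p, hp⟩ := hH m₁ (hsuppH m₁ q.start_mem_support)
      have hm₁T : m₁ ∉ T := fun h => hTM m₁ h q.start_mem_support
      obtain ⟨s, t, hadj, hs_supp, hsT, htT⟩ :=
        walk_entry p.reverse hm₁T ⟨k, by simp, hkT⟩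
      have hsH : s ∈ H := by
        rw [SimpleGraph.Walk.support_reverse, List.mem_reverse] at hs_supp
        exact hp s hs_supp
      have hsM : s ∈ M := by
        by_contra hc
        exact hsT (hclose t htT s hadj.symm hsH hc)
      exact ⟨s, hsM, t, htT, hadj.symm⟩
    obtain ⟨z₀, t₁, d, hz₀P, hz₀first, hsplit⟩ :=
      walk_first_split q (fun z => ∃ t ∈ T, G.Adj t z) hattach
    have hz₀M : z₀ ∈ M := by
      show z₀ ∈ q.support
      rw [← hsplit]
      simp [SimpleGraph.Walk.mem_support_append_iff]
    have hsupp_eq : q.support = t₁.support ++ d.support.tail := by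
      rw [← hsplit, SimpleGraph.Walk.support_append]
    have hnd : (t₁.support ++ d.support.tail).Nodup := by
      rw [← hsupp_eq]; exact hq.support_nodup
    have hdisj : ∀ a ∈ t₁.support, a ∉ d.support.tail :=
      fun a ha hb => (List.nodup_append'.mp hnd).2.2 ha hb
    have ht₁M : ∀ z ∈ t₁.support, z ∈ M := by
      intro z hz; rw [hMdef]; show z ∈ q.support
      rw [hsupp_eq]; exact List.mem_append_left _ hz
    have hdM : ∀ z ∈ d.support, z ∈ M := by
      intro z hz
      rw [SimpleGraph.Walk.support_eq_cons] at hz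
      rcases List.mem_cons.mp hz with rfl | hz
      · exact hz₀M
      · show z ∈ q.support; rw [hsupp_eq]; exact List.mem_append_right _ hz
    have hMH : M ⊆ H \ {k} := fun z hz => hsupp z hz
    have hTdisjM : Disjoint T M := Set.disjoint_left.mpr hTM
    obtain ⟨tz, htzT, htzadj⟩ := hz₀P
    by_cases hT1 : (T ∩ N₁).Nonempty
    · -- X := M, Y := ∅  (E2 via attachment if needed; E3 via X ∩ N₁? no—)
      -- use X := ∅, Y := M
      refine ⟨T, ∅, M, hTH, by simp, hMH, hkT, hTconn, by simp, hTdisjM, by simp,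
        by simp, walk_support_conn q, by simp [Set.not_nonempty_empty],
        fun _ => ⟨m₂, ⟨q.end_mem_support, hm₂⟩⟩, Or.inl hT1,
        Or.inr ⟨tz, htzT, z₀, hz₀M, htzadj⟩,
        Or.inr (Or.inr ⟨m₁, ⟨q.start_mem_support, hm₁⟩⟩)⟩
    · by_cases hT2 : (T ∩ N₂).Nonempty
      · -- X := M, Y := ∅
        refine ⟨T, M, ∅, hTH, hMH, by simp, hkT, hTconn, hTdisjM, by simp, by simp,
          walk_support_conn q, by simp, fun _ => ⟨m₁, ⟨q.start_mem_support, hm₁⟩⟩,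
          by simp [Set.not_nonempty_empty],
          Or.inr ⟨tz, htzT, z₀, hz₀M, htzadj⟩, Or.inl hT2,
          Or.inr (Or.inl ⟨m₂, ⟨q.end_mem_support, hm₂⟩⟩)⟩
      · -- neither: split or recurse
        by_cases hC : ∃ z₂ ∈ d.support.tail, ∃ t ∈ T, G.Adj t z₂
        · obtain ⟨z₂, hz₂tail, t₂, ht₂T, hadj₂⟩ := hC
          cases hd : d with
          | nil => rw [hd] at hz₂tail; simp at hz₂tail
          | @cons _ w₂ _ e' d' =>
            rw [hd] at hz₂tail
            have hdtail : d.support.tail = d'.support := by rw [hd]; simp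
            have hz₂' : z₂ ∈ d'.support := by simpa using hz₂tail
            have hXsubM : ∀ z ∈ t₁.support, z ∈ M := ht₁M
            have hYsubM : ∀ z ∈ d'.support, z ∈ M := by
              intro z hz; apply hdM; rw [hd]; simp [hz]
            have hw₂d : w₂ ∈ d'.support := d'.start_mem_support
            refine ⟨T, {z | z ∈ t₁.support}, {z | z ∈ d'.support}, hTH,
              fun z hz => hMH (hXsubM z hz), fun z hz => hMH (hYsubM z hz), hkT, hTconn,
              Set.disjoint_left.mpr (fun z hz => hTM z hz ∘ hXsubM z),
              Set.disjoint_left.mpr (fun z hz => hTM z hz ∘ hYsubM z),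
              Set.disjoint_left.mpr (fun z hz hz' => hdisj z hz (hdtail ▸ hz')),
              walk_support_conn t₁, walk_support_conn d',
              fun _ => ⟨m₁, ⟨t₁.start_mem_support, hm₁⟩⟩,
              fun _ => ⟨m₂, ⟨d'.end_mem_support, hm₂⟩⟩,
              Or.inr ⟨tz, htzT, z₀, t₁.end_mem_support, htzadj⟩,
              Or.inr ⟨t₂, ht₂T, z₂, hz₂', hadj₂⟩,
              Or.inl ⟨z₀, t₁.end_mem_support, w₂, hw₂d, e'⟩⟩
        · -- unique attachment z₀; use trich and recurse
          push_neg at hC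
          have huniq : ∀ z ∈ q.support, (∃ t ∈ T, G.Adj t z) → z = z₀ := by
            intro z hz hzP
            rw [hsupp_eq] at hz
            rcases List.mem_append.mp hz with hz | hz
            · exact hz₀first z hz hzP
            · obtain ⟨t, ht, hadj⟩ := hzP
              exact absurd hadj (hC z hz t ht)
          have hz₀H : z₀ ∈ H := (hMH hz₀M).1
          have hz₀k : z₀ ≠ k := fun h => hkM (h ▸ hz₀M)
          rcases trich z₀ hz₀H hz₀k with ⟨z, hzN, hconn⟩ | ⟨z, hzN, hconn⟩ |
            ⟨m₁', hm₁', m₂', hm₂', hconn⟩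
          · exfalso
            have hzT : z ∉ T := fun h => hT1 ⟨z, h, hzN⟩
            obtain ⟨p, hp⟩ := hconn
            obtain ⟨s, t, hadj, hs_supp, hsT, htT⟩ :=
              walk_entry p.reverse hzT ⟨k, by simp, hkT⟩
            rw [SimpleGraph.Walk.support_reverse, List.mem_reverse] at hs_supp
            have hs : s ∈ H \ {z₀} := hp s hs_supp
            by_cases hsM : s ∈ M
            · exact hs.2 (huniq s hsM ⟨t, htT, hadj.symm⟩)
            · exact hsT (hclose t htT s hadj.symm hs.1 hsM)
          · exfalso
            have hzT : z ∉ T := fun h => hT2 ⟨z, h, hzN⟩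
            obtain ⟨p, hp⟩ := hconn
            obtain ⟨s, t, hadj, hs_supp, hsT, htT⟩ :=
              walk_entry p.reverse hzT ⟨k, by simp, hkT⟩
            rw [SimpleGraph.Walk.support_reverse, List.mem_reverse] at hs_supp
            have hs : s ∈ H \ {z₀} := hp s hs_supp
            by_cases hsM : s ∈ M
            · exact hs.2 (huniq s hsM ⟨t, htT, hadj.symm⟩)
            · exact hsT (hclose t htT s hadj.symm hs.1 hsM)
          · obtain ⟨p₀, hp₀⟩ := hconn
            have hq' : p₀.bypass.IsPath := SimpleGraph.Walk.bypass_isPath p₀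
            have hsupp'' : ∀ z ∈ p₀.bypass.support, z ∈ (H \ {k}) \ {z₀} :=
              fun z hz => hp₀ z (SimpleGraph.Walk.support_bypass_subset p₀ hz)
            set M' : Set V := {w | w ∈ p₀.bypass.support} with hM'def
            set T' : Set V := {z | ConnIn G (H \ M') k z} with hT'def
            have hz₀M' : z₀ ∉ M' := fun h => (hsupp'' z₀ h).2 rfl
            have hm₁'T : m₁' ∉ T := fun h => hT1 ⟨m₁', h, hm₁'⟩
            have hTM' : ∀ w, w ∈ T → w ∉ M' := by
              intro w hwT hwM'
              obtain ⟨s, t, hadj, hs_supp, hsT, htT⟩ :=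
                walk_entry p₀.bypass hm₁'T ⟨w, hwM', hwT⟩
              have hs : s ∈ (H \ {k}) \ {z₀} := hsupp'' s hs_supp
              by_cases hsM : s ∈ M
              · exact hs.2 (huniq s hsM ⟨t, htT, hadj.symm⟩)
              · exact hsT (hclose t htT s hadj.symm hs.1.1 hsM)
            have hTsubHM' : T ⊆ H \ M' := fun z hz => ⟨hTH hz, hTM' z hz⟩
            have hTT' : T ⊆ T' := fun t ht => (hTconn t ht).mono hTsubHM'
            have hz₀T' : z₀ ∈ T' :=
              ConnIn.trans (hTT' htzT) (ConnIn.of_adj htzadj (hTsubHM' htzT)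
                ⟨hz₀H, hz₀M'⟩)
            have hz₀T : z₀ ∉ T := fun h => hTM z₀ h hz₀M
            have hss : H \ T' ⊂ H \ T := by
              refine ⟨Set.diff_subset_diff_right hTT', fun hsub => ?_⟩
              exact (hsub ⟨hz₀H, hz₀T⟩).2 hz₀T'
            have hlt : (H \ T').ncard < (H \ T).ncard :=
              Set.ncard_lt_ncard hss (Set.toFinite _)
            exact ih p₀.bypass hq' hm₁' hm₂'
              (fun z hz => (hsupp'' z hz).1) (by show (H \ T').ncard ≤ n; omega)


theorem core [Fintype V] {H N₁ N₂ : Set V} {k : V}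
    (hk : k ∈ H) (hH : ∀ z ∈ H, ConnIn G H k z)
    (trich : ∀ h ∈ H, h ≠ k →
      (∃ z ∈ N₁, ConnIn G (H \ {h}) k z) ∨ (∃ z ∈ N₂, ConnIn G (H \ {h}) k z) ∨
      (∃ m₁ ∈ N₁, ∃ m₂ ∈ N₂, ConnIn G ((H \ {k}) \ {h}) m₁ m₂))
    (base : ∃ m₁ ∈ N₁, ∃ m₂ ∈ N₂, ConnIn G (H \ {k}) m₁ m₂) :
    CoreOut G H N₁ N₂ k := by
  classical
  obtain ⟨m₁, hm₁, m₂, hm₂, ⟨p, hp⟩⟩ := base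
  exact core_aux hk hH trich _ p.bypass p.bypass_isPath hm₁ hm₂
    (fun z hz => hp z (p.support_bypass_subset hz)) le_rfl



theorem setConn_union {A X : Set V} {r : V} (hr : r ∈ A) (hA : ∀ x ∈ A, ConnIn G A r x)
    (hX : ∀ x ∈ X, ∀ y ∈ X, ConnIn G X x y)
    (hatt : X.Nonempty → ∃ x ∈ X, ∃ a' ∈ A, G.Adj x a') :
    ∀ x ∈ A ∪ X, ConnIn G (A ∪ X) r x := by
  intro x hx
  rcases hx with hx | hx
  · exact (hA x hx).mono Set.subset_union_left
  · obtain ⟨x₀, hx₀, a₀, ha₀, hadj⟩ := hatt ⟨x, hx⟩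
    exact ConnIn.trans (y := a₀) ((hA a₀ ha₀).mono Set.subset_union_left)
      (ConnIn.trans (y := x₀) (ConnIn.of_adj hadj.symm (Or.inl ha₀) (Or.inr hx₀))
        ((hX x₀ hx₀ x hx).mono Set.subset_union_right))

/-- Component of `x` within `S`. -/
def cls (G : SimpleGraph V) (S : Set V) (x : V) : Set V := {z | ConnIn G S x z}

theorem cls_conn {S : Set V} {x : V} (hx : x ∈ S) :
    ∀ z ∈ cls G S x, ConnIn G (cls G S x) x z :=
  fun _ hz => ConnIn.restrict hz (fun _ hw => hw)

theorem cls_mem {S : Set V} {x : V} (hx : x ∈ S) : x ∈ cls G S x := ConnIn.refl hx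

theorem cls_sub {S : Set V} {x : V} : cls G S x ⊆ S := fun _ hz => hz.right_mem

theorem cls_disj {S : Set V} {x y : V} (h : ¬ ConnIn G S x y) :
    Disjoint (cls G S x) (cls G S y) := by
  rw [Set.disjoint_left]
  intro z hzx hzy
  exact h (ConnIn.trans hzx (ConnIn.symm hzy))

/-- Attachment of a hub `u` to the component of `x` in `S`. -/
def Att (G : SimpleGraph V) (S : Set V) (u x : V) : Prop :=
  ∃ z, ConnIn G S x z ∧ G.Adj z u

theorem singleton_pairconn (u : V) :
    ∀ x ∈ ({u} : Set V), ∀ y ∈ ({u} : Set V), ConnIn G ({u} : Set V) x y := by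
  intro x hx y hy
  rw [Set.mem_singleton_iff] at hx hy
  subst hx; subst hy
  exact ConnIn.refl rfl

theorem cls_disj_singleton {S : Set V} {x u : V} (hu : u ∉ S) :
    Disjoint (cls G S x) ({u} : Set V) :=
  Set.disjoint_singleton_right.mpr (fun h => hu (ConnIn.right_mem h))

theorem constr_A {S : Set V} {a b c u v : V}
    (hSu : u ∉ S) (hSv : v ∉ S) (huv : u ≠ v)
    (ha : a ∈ S) (hb : b ∈ S) (hc : c ∈ S)
    (hsab : ¬ ConnIn G S a b) (hsac : ¬ ConnIn G S a c) (hsbc : ¬ ConnIn G S b c)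
    (hPa : Att G S u a) (hPb : Att G S u b)
    (hQa : Att G S v a) (hQb : Att G S v b) (hQc : Att G S v c) :
    RootedK3 G a b c := by
  obtain ⟨za, hza, hzau⟩ := hPa
  obtain ⟨zb, hzb, hzbu⟩ := hPb
  obtain ⟨wa, hwa, hwav⟩ := hQa
  obtain ⟨wb, hwb, hwbv⟩ := hQb
  obtain ⟨wc, hwc, hwcv⟩ := hQc
  refine ⟨cls G S a, cls G S b ∪ {u}, cls G S c ∪ {v},
    cls_mem ha, Or.inl (cls_mem hb), Or.inl (cls_mem hc), ?_, ?_, ?_, ?_, ?_, ?_, ?_, ?_, ?_⟩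
  · rw [Set.disjoint_union_right]
    exact ⟨cls_disj hsab, cls_disj_singleton hSu⟩
  · rw [Set.disjoint_union_right]
    exact ⟨cls_disj hsac, cls_disj_singleton hSv⟩
  · rw [Set.disjoint_union_left, Set.disjoint_union_right, Set.disjoint_union_right]
    refine ⟨⟨cls_disj hsbc, cls_disj_singleton hSv⟩, ?_, ?_⟩
    · exact (cls_disj_singleton hSu).symm
    · simp [Set.disjoint_singleton_left, Set.disjoint_singleton_right, huv]
  · exact cls_conn ha
  · exact setConn_union (cls_mem hb) (cls_conn hb) (singleton_pairconn u)
      (fun _ => ⟨u, rfl, zb, hzb, hzbu.symm⟩)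
  · exact setConn_union (cls_mem hc) (cls_conn hc) (singleton_pairconn v)
      (fun _ => ⟨v, rfl, wc, hwc, hwcv.symm⟩)
  · exact ⟨za, hza, u, Or.inr rfl, hzau⟩
  · exact ⟨wa, hwa, v, Or.inr rfl, hwav⟩
  · exact ⟨wb, Or.inl hwb, v, Or.inr rfl, hwbv⟩

theorem cls_pairconn {S : Set V} {x : V} (hx : x ∈ S) :
    ∀ z ∈ cls G S x, ∀ w ∈ cls G S x, ConnIn G (cls G S x) z w :=
  fun z hz w hw => ConnIn.trans (ConnIn.symm (cls_conn hx z hz)) (cls_conn hx w hw)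

/-- Connectivity of `cls x ∪ {u}` where `u` attaches. -/
theorem cls_hub_conn {S : Set V} {x u z : V} (hx : x ∈ S) (hz : ConnIn G S x z)
    (hzu : G.Adj z u) : ∀ w ∈ cls G S x ∪ {u}, ConnIn G (cls G S x ∪ {u}) x w :=
  setConn_union (cls_mem hx) (cls_conn hx) (singleton_pairconn u)
    (fun _ => ⟨u, rfl, z, hz, hzu.symm⟩)

theorem constr_C {S : Set V} {a b c u v : V}
    (hSu : u ∉ S) (hSv : v ∉ S)
    (ha : a ∈ S) (hb : b ∈ S) (hc : c ∈ S)
    (hsab : ¬ ConnIn G S a b) (hsac : ¬ ConnIn G S a c) (hsbc : ¬ ConnIn G S b c)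
    (hadj_uv : G.Adj u v)
    (hPa : Att G S u a) (hQb : Att G S v b) (hPc : Att G S u c) (hQc : Att G S v c) :
    RootedK3 G a b c := by
  obtain ⟨za, hza, hzau⟩ := hPa
  obtain ⟨wb, hwb, hwbv⟩ := hQb
  obtain ⟨zc, hzc, hzcu⟩ := hPc
  obtain ⟨wc, hwc, hwcv⟩ := hQc
  refine ⟨cls G S a ∪ {u}, cls G S b ∪ {v}, cls G S c,
    Or.inl (cls_mem ha), Or.inl (cls_mem hb), cls_mem hc, ?_, ?_, ?_,
    cls_hub_conn ha hza hzau, cls_hub_conn hb hwb hwbv, cls_conn hc,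
    ⟨u, Or.inr rfl, v, Or.inr rfl, hadj_uv⟩,
    ⟨u, Or.inr rfl, zc, hzc, hzcu.symm⟩,
    ⟨v, Or.inr rfl, wc, hwc, hwcv.symm⟩⟩
  · rw [Set.disjoint_union_left, Set.disjoint_union_right, Set.disjoint_union_right]
    refine ⟨⟨cls_disj hsab, cls_disj_singleton hSv⟩, (cls_disj_singleton hSu).symm, ?_⟩
    simp [Set.disjoint_singleton_left, Set.disjoint_singleton_right, hadj_uv.ne]
  · rw [Set.disjoint_union_left]
    exact ⟨cls_disj hsac, (cls_disj_singleton hSu).symm⟩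
  · rw [Set.disjoint_union_left]
    exact ⟨cls_disj hsbc, (cls_disj_singleton hSv).symm⟩

theorem constr_B {S : Set V} {a b c u v z₁ z₂ : V}
    (hSu : u ∉ S) (hSv : v ∉ S) (huv : u ≠ v)
    (ha : a ∈ S) (hb : b ∈ S) (hc : c ∈ S)
    (hsab : ¬ ConnIn G S a b) (hsac : ¬ ConnIn G S a c) (hsbc : ¬ ConnIn G S b c)
    (hz₁u : G.Adj u z₁) (hz₂v : G.Adj v z₂) (hlink : ConnIn G S z₁ z₂)
    (hda : ¬ ConnIn G S a z₁) (hdb : ¬ ConnIn G S b z₁) (hdc : ¬ ConnIn G S c z₁)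
    (hPa : Att G S u a) (hQb : Att G S v b) (hPc : Att G S u c) (hQc : Att G S v c) :
    RootedK3 G a b c := by
  obtain ⟨za, hza, hzau⟩ := hPa
  obtain ⟨wb, hwb, hwbv⟩ := hQb
  obtain ⟨zc, hzc, hzcu⟩ := hPc
  obtain ⟨wc, hwc, hwcv⟩ := hQc
  have hz₁S : z₁ ∈ S := hlink.left_mem
  refine ⟨(cls G S a ∪ {u}) ∪ cls G S z₁, cls G S b ∪ {v}, cls G S c,
    Or.inl (Or.inl (cls_mem ha)), Or.inl (cls_mem hb), cls_mem hc, ?_, ?_, ?_,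
    ?_, cls_hub_conn hb hwb hwbv, cls_conn hc,
    ⟨z₂, Or.inr hlink, v, Or.inr rfl, hz₂v.symm⟩,
    ⟨u, Or.inl (Or.inr rfl), zc, hzc, hzcu.symm⟩,
    ⟨v, Or.inr rfl, wc, hwc, hwcv.symm⟩⟩
  · rw [Set.disjoint_union_left, Set.disjoint_union_left, Set.disjoint_union_right,
      Set.disjoint_union_right, Set.disjoint_union_right]
    refine ⟨⟨⟨cls_disj hsab, cls_disj_singleton hSv⟩,
      (cls_disj_singleton hSu).symm, ?_⟩,
      cls_disj (fun h => hdb h.symm), cls_disj_singleton hSv⟩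
    simp [Set.disjoint_singleton_left, Set.disjoint_singleton_right, huv]
  · rw [Set.disjoint_union_left, Set.disjoint_union_left]
    exact ⟨⟨cls_disj hsac, (cls_disj_singleton hSu).symm⟩,
      cls_disj (fun h => hdc h.symm)⟩
  · rw [Set.disjoint_union_left]
    exact ⟨cls_disj hsbc, (cls_disj_singleton hSv).symm⟩
  · refine setConn_union (Or.inl (cls_mem ha)) (cls_hub_conn ha hza hzau)
      (cls_pairconn hz₁S) (fun _ => ⟨z₁, cls_mem hz₁S, u, Or.inr rfl, hz₁u.symm⟩)

theorem constr_bad {S : Set V} {a b c u v : V}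
    (hSu : u ∉ S) (hSv : v ∉ S) (huv : u ≠ v)
    (ha : a ∈ S) (hb : b ∈ S) (hc : c ∈ S)
    (hsab : ¬ ConnIn G S a b) (hsac : ¬ ConnIn G S a c) (hsbc : ¬ ConnIn G S b c)
    (hPa : Att G S u a) (hQb : Att G S v b)
    (hout : CoreOut G (cls G S c) {z | ConnIn G S c z ∧ G.Adj u z}
      {z | ConnIn G S c z ∧ G.Adj v z} c) :
    RootedK3 G a b c := by
  obtain ⟨za, hza, hzau⟩ := hPa
  obtain ⟨wb, hwb, hwbv⟩ := hQb
  obtain ⟨T, X, Y, hTH, hXH, hYH, hkT, hTconn, hdTX, hdTY, hdXY,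
    hXconn, hYconn, hXN₁, hYN₂, hE1, hE2, hE3⟩ := hout
  have hXc : X ⊆ cls G S c := fun z hz => (hXH hz).1
  have hYc : Y ⊆ cls G S c := fun z hz => (hYH hz).1
  have hTS : ∀ z ∈ T, z ∈ S := fun z hz => (hTH hz).right_mem
  have hXS : ∀ z ∈ X, z ∈ S := fun z hz => (hXc hz).right_mem
  have hYS : ∀ z ∈ Y, z ∈ S := fun z hz => (hYc hz).right_mem
  refine ⟨(cls G S a ∪ {u}) ∪ X, (cls G S b ∪ {v}) ∪ Y, T,
    Or.inl (Or.inl (cls_mem ha)), Or.inl (Or.inl (cls_mem hb)), hkT, ?_, ?_, ?_, ?_, ?_,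
    fun x hx => hTconn x hx, ?_, ?_, ?_⟩
  · rw [Set.disjoint_left]
    rintro z ((hz | hz) | hz) ((hz' | hz') | hz')
    · exact hsab (hz.trans hz'.symm)
    · exact hSv (hz' ▸ hz.right_mem)
    · exact hsac (hz.trans (hYc hz').symm)
    · exact hSu (hz ▸ hz'.right_mem)
    · exact huv (hz.symm.trans hz')
    · exact hSu (hz ▸ hYS z hz')
    · exact hsbc (hz'.trans (hXc hz).symm)
    · exact hSv (hz' ▸ hXS z hz)
    · exact Set.disjoint_left.mp hdXY hz hz'
  · rw [Set.disjoint_left]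
    rintro z ((hz | hz) | hz) hz'
    · exact hsac (hz.trans (hTH hz').symm)
    · exact hSu (hz ▸ hTS z hz')
    · exact Set.disjoint_left.mp hdTX hz' hz
  · rw [Set.disjoint_left]
    rintro z ((hz | hz) | hz) hz'
    · exact hsbc (hz.trans (hTH hz').symm)
    · exact hSv (hz ▸ hTS z hz')
    · exact Set.disjoint_left.mp hdTY hz' hz
  · refine setConn_union (Or.inl (cls_mem ha)) (cls_hub_conn ha hza hzau)
      hXconn (fun hne => ?_)
    obtain ⟨x₀, hx₀X, hx₀N⟩ := hXN₁ hne
    exact ⟨x₀, hx₀X, u, Or.inr rfl, hx₀N.2.symm⟩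
  · refine setConn_union (Or.inl (cls_mem hb)) (cls_hub_conn hb hwb hwbv)
      hYconn (fun hne => ?_)
    obtain ⟨y₀, hy₀Y, hy₀N⟩ := hYN₂ hne
    exact ⟨y₀, hy₀Y, v, Or.inr rfl, hy₀N.2.symm⟩
  · rcases hE3 with ⟨x, hx, y, hy, hadj⟩ | ⟨x, hxX, hxN⟩ | ⟨y, hyY, hyN⟩
    · exact ⟨x, Or.inr hx, y, Or.inr hy, hadj⟩
    · exact ⟨x, Or.inr hxX, v, Or.inl (Or.inr rfl), hxN.2.symm⟩
    · exact ⟨u, Or.inl (Or.inr rfl), y, Or.inr hyY, hyN.2⟩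
  · rcases hE1 with ⟨t, htT, htN⟩ | ⟨t, htT, x, hxX, hadj⟩
    · exact ⟨u, Or.inl (Or.inr rfl), t, htT, htN.2⟩
    · exact ⟨x, Or.inr hxX, t, htT, hadj.symm⟩
  · rcases hE2 with ⟨t, htT, htN⟩ | ⟨t, htT, y, hyY, hadj⟩
    · exact ⟨v, Or.inl (Or.inr rfl), t, htT, htN.2⟩
    · exact ⟨y, Or.inr hyY, t, htT, hadj.symm⟩

/-- Extraction of an inner `u`–`v` segment (or a `c`-connection) from a walk starting at
hub `u`, in the "bad case" of the two-hub configuration. -/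
theorem from_u {Ws S : Set V} {a b c u v h : V} (hS : S = Ws \ ({u, v} : Set V))
    (hnadj : ¬ G.Adj u v)
    (hnolink : ∀ z₁ z₂, G.Adj u z₁ → G.Adj v z₂ → ConnIn G S z₁ z₂ →
      ConnIn G S a z₁ ∨ ConnIn G S b z₁ ∨ ConnIn G S c z₁)
    (hQa : ¬ Att G S v a) (hPb : ¬ Att G S u b) (hub : u ≠ b) :
    ∀ (n : ℕ) (q : G.Walk u b), q.length ≤ n → (∀ z ∈ q.support, z ∈ Ws \ {h}) →
    ((∃ z, ConnIn G (S \ {h}) c z ∧ G.Adj u z) ∨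
     (∃ z, ConnIn G (S \ {h}) c z ∧ G.Adj v z) ∨
     (∃ z₁ z₂, G.Adj u z₁ ∧ G.Adj v z₂ ∧ ConnIn G ((S \ {c}) \ {h}) z₁ z₂ ∧
       ConnIn G S c z₁)) := by
  have hsub : ((Ws \ {h}) \ ({u, v} : Set V)) ⊆ S \ {h} := by
    intro z hz
    exact ⟨hS ▸ ⟨hz.1.1, hz.2⟩, hz.1.2⟩
  have hsubS : S \ {h} ⊆ S := Set.diff_subset
  intro n
  induction n with
  | zero =>
    intro q hlen _
    cases q with
    | nil => exact absurd rfl hub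
    | cons e q₁ => simp at hlen
  | succ n ih =>
    intro q hlen hsupp
    cases q with
    | nil => exact absurd rfl hub
    | @cons _ w _ e q₁ =>
      have hw_mem : w ∈ Ws \ {h} := hsupp w (by simp)
      have hwu : w ≠ u := e.ne'
      by_cases hwv : w = v
      · exact absurd (hwv ▸ e) hnadj
      have hq₁supp : ∀ z ∈ q₁.support, z ∈ Ws \ {h} := fun z hz => hsupp z (by simp [hz])
      have hwR : w ∉ ({u, v} : Set V) := by simp [hwu, hwv]
      rcases connIn_elim_first (R := {u, v}) q₁ hq₁supp hwR with
        hclean | ⟨hubv, hhub, z₂, hz₂, hadj₂, q₂, hq₂supp, hlen₂⟩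
      · exact absurd ⟨w, ((hclean.mono hsub).mono hsubS).symm, e.symm⟩ hPb
      · simp only [Set.mem_insert_iff, Set.mem_singleton_iff] at hhub
        rcases hhub with rfl | rfl
        · refine ih q₂ ?_ hq₂supp
          have : q₁.length + 1 ≤ n + 1 := by simpa using hlen
          omega
        · have hz₂S : ConnIn G (S \ {h}) w z₂ := hz₂.mono hsub
          have hwz₂ : ConnIn G S w z₂ := hz₂S.mono hsubS
          rcases hnolink w z₂ e hadj₂.symm hwz₂ with hcw | hcw | hcw
          · exact absurd ⟨z₂, hcw.trans hwz₂, hadj₂⟩ hQa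
          · exact absurd ⟨w, hcw, e.symm⟩ hPb
          · obtain ⟨r, hr⟩ := hz₂S
            by_cases hcr : c ∈ r.support
            · exact Or.inl ⟨w, (connIn_to_support r hr hcr).symm, e⟩
            · exact Or.inr (Or.inr ⟨w, z₂, e, hadj₂.symm,
                ⟨r, fun z hz => ⟨⟨(hr z hz).1, fun hzc => hcr (hzc ▸ hz)⟩, (hr z hz).2⟩⟩, hcw⟩)

theorem mid_uv {Ws S : Set V} {a b c u v h : V} (hS : S = Ws \ ({u, v} : Set V))
    (hnadj : ¬ G.Adj u v)
    (hnolink : ∀ z₁ z₂, G.Adj u z₁ → G.Adj v z₂ → ConnIn G S z₁ z₂ →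
      ConnIn G S a z₁ ∨ ConnIn G S b z₁ ∨ ConnIn G S c z₁)
    (hQa : ¬ Att G S v a) (hPb : ¬ Att G S u b) (hub : u ≠ b)
    (hsab : ¬ ConnIn G S a b)
    (hau : a ≠ u) (hav : a ≠ v)
    (hcon : ConnIn G (Ws \ {h}) a b) :
    ((∃ z, ConnIn G (S \ {h}) c z ∧ G.Adj u z) ∨
     (∃ z, ConnIn G (S \ {h}) c z ∧ G.Adj v z) ∨
     (∃ z₁ z₂, G.Adj u z₁ ∧ G.Adj v z₂ ∧ ConnIn G ((S \ {c}) \ {h}) z₁ z₂ ∧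
       ConnIn G S c z₁)) := by
  have hsub : ((Ws \ {h}) \ ({u, v} : Set V)) ⊆ S \ {h} := by
    intro z hz
    exact ⟨hS ▸ ⟨hz.1.1, hz.2⟩, hz.1.2⟩
  have hsubS : S \ {h} ⊆ S := Set.diff_subset
  obtain ⟨p, hp⟩ := hcon
  have haR : a ∉ ({u, v} : Set V) := by simp [hau, hav]
  rcases connIn_elim_first (R := {u, v}) p hp haR with
    hclean | ⟨hubv, hhub, z, hz, hadjz, q, hqsupp, _⟩
  · exact absurd ((hclean.mono hsub).mono hsubS) hsab
  · simp only [Set.mem_insert_iff, Set.mem_singleton_iff] at hhub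
    rcases hhub with rfl | rfl
    · exact from_u hS hnadj hnolink hQa hPb hub q.length q le_rfl hqsupp
    · exact absurd ⟨z, (hz.mono hsub).mono hsubS, hadjz⟩ hQa

def Hyp3 (G : SimpleGraph V) (Ws : Set V) (a b c : V) : Prop :=
  ∀ v : V, ∃ x y : V, (x = a ∨ x = b ∨ x = c) ∧ (y = a ∨ y = b ∨ y = c) ∧ x ≠ y ∧
    ConnIn G (Ws \ {v}) x y

theorem Hyp3.swap12 {Ws : Set V} {a b c : V} (h : Hyp3 G Ws a b c) : Hyp3 G Ws b a c := by
  intro v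
  obtain ⟨x, y, hx, hy, hxy, hc⟩ := h v
  exact ⟨x, y, by tauto, by tauto, hxy, hc⟩

theorem Hyp3.swap23 {Ws : Set V} {a b c : V} (h : Hyp3 G Ws a b c) : Hyp3 G Ws a c b := by
  intro v
  obtain ⟨x, y, hx, hy, hxy, hc⟩ := h v
  exact ⟨x, y, by tauto, by tauto, hxy, hc⟩

theorem Hyp3.cycle {Ws : Set V} {a b c : V} (h : Hyp3 G Ws a b c) : Hyp3 G Ws b c a :=
  h.swap12.swap23

theorem hyp3_pair {Ws : Set V} {a b c : V} (h : Hyp3 G Ws a b c) (v : V) :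
    ConnIn G (Ws \ {v}) a b ∨ ConnIn G (Ws \ {v}) a c ∨ ConnIn G (Ws \ {v}) b c := by
  obtain ⟨x, y, hx, hy, hxy, hc⟩ := h v
  rcases hx with rfl | rfl | rfl <;> rcases hy with rfl | rfl | rfl
  · exact absurd rfl hxy
  · exact Or.inl hc
  · exact Or.inr (Or.inl hc)
  · exact Or.inl hc.symm
  · exact absurd rfl hxy
  · exact Or.inr (Or.inr hc)
  · exact Or.inr (Or.inl hc.symm)
  · exact Or.inr (Or.inr hc.symm)
  · exact absurd rfl hxy

theorem hyp3_at_root {Ws : Set V} {a b c : V} (h : Hyp3 G Ws a b c) :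
    ConnIn G (Ws \ {a}) b c := by
  rcases hyp3_pair h a with h' | h' | h'
  · exact absurd h'.left_mem.2 (by simp)
  · exact absurd h'.left_mem.2 (by simp)
  · exact h'

/-- The bad case of the two-non-root-hub configuration:
`a` attaches only to `u`, `b` only to `v`, `c` to both. -/
theorem case_uv_bad [Fintype V] {Ws : Set V} {a b c u v : V}
    (hau : a ≠ u) (hbu : b ≠ u) (hcu : c ≠ u)
    (hav : a ≠ v) (hbv : b ≠ v) (hcv : c ≠ v)
    (huv : u ≠ v)
    (haWs : a ∈ Ws) (hbWs : b ∈ Ws) (hcWs : c ∈ Ws)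
    (hyp : Hyp3 G Ws a b c)
    (hsab : ¬ ConnIn G (Ws \ ({u, v} : Set V)) a b)
    (hsac : ¬ ConnIn G (Ws \ ({u, v} : Set V)) a c)
    (hsbc : ¬ ConnIn G (Ws \ ({u, v} : Set V)) b c)
    (hPa : Att G (Ws \ ({u, v} : Set V)) u a)
    (hQa' : ¬ Att G (Ws \ ({u, v} : Set V)) v a)
    (hPb' : ¬ Att G (Ws \ ({u, v} : Set V)) u b)
    (hQb : Att G (Ws \ ({u, v} : Set V)) v b)
    (hPc : Att G (Ws \ ({u, v} : Set V)) u c)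
    (hQc : Att G (Ws \ ({u, v} : Set V)) v c) :
    RootedK3 G a b c := by
  set S : Set V := Ws \ ({u, v} : Set V) with hSdef
  have hSu : u ∉ S := by simp [hSdef]
  have hSv : v ∉ S := by simp [hSdef]
  have haS : a ∈ S := ⟨haWs, by simp [hau, hav]⟩
  have hbS : b ∈ S := ⟨hbWs, by simp [hbu, hbv]⟩
  have hcS : c ∈ S := ⟨hcWs, by simp [hcu, hcv]⟩
  by_cases hadj : G.Adj u v
  · exact constr_C hSu hSv haS hbS hcS hsab hsac hsbc hadj hPa hQb hPc hQc
  by_cases hlink : ∃ z₁ z₂, G.Adj u z₁ ∧ G.Adj v z₂ ∧ ConnIn G S z₁ z₂ ∧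
      ¬ ConnIn G S a z₁ ∧ ¬ ConnIn G S b z₁ ∧ ¬ ConnIn G S c z₁
  · obtain ⟨z₁, z₂, h1, h2, h3, h4, h5, h6⟩ := hlink
    exact constr_B hSu hSv huv haS hbS hcS hsab hsac hsbc h1 h2 h3 h4 h5 h6 hPa hQb hPc hQc
  have hnolink : ∀ z₁ z₂, G.Adj u z₁ → G.Adj v z₂ → ConnIn G S z₁ z₂ →
      ConnIn G S a z₁ ∨ ConnIn G S b z₁ ∨ ConnIn G S c z₁ := by
    intro z₁ z₂ h1 h2 h3
    by_contra hcon
    push_neg at hcon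
    exact hlink ⟨z₁, z₂, h1, h2, h3, hcon.1, hcon.2.1, hcon.2.2⟩
  -- conversion helpers into the component of c
  have conv1 : ∀ {h z : V}, ConnIn G (S \ {h}) c z → ConnIn G (cls G S c \ {h}) c z :=
    fun {h z} hcz => hcz.restrict (fun w hw => ⟨hw.mono Set.diff_subset, hw.right_mem.2⟩)
  have hsub2 : ∀ {h : V}, ((S \ {c}) \ {h} : Set V) ⊆ S :=
    fun {h} => Set.Subset.trans Set.diff_subset Set.diff_subset
  have conv2 : ∀ {h z₁ z₂ : V}, ConnIn G ((S \ {c}) \ {h}) z₁ z₂ → ConnIn G S c z₁ →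
      ConnIn G ((cls G S c \ {c}) \ {h}) z₁ z₂ :=
    fun {h z₁ z₂} hzz hcz₁ => hzz.restrict (fun w hw =>
      ⟨⟨hcz₁.trans (hw.mono hsub2), hw.right_mem.1.2⟩, hw.right_mem.2⟩)
  -- base connector
  have hconc : ConnIn G (Ws \ {c}) a b := hyp3_at_root hyp.cycle.cycle
  have hbase : ∃ m₁ ∈ {z | ConnIn G S c z ∧ G.Adj u z},
      ∃ m₂ ∈ {z | ConnIn G S c z ∧ G.Adj v z}, ConnIn G (cls G S c \ {c}) m₁ m₂ := by
    rcases mid_uv hSdef hadj hnolink hQa' hPb' hbu.symm hsab hau hav hconc with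
      ⟨z, hcz, _⟩ | ⟨z, hcz, _⟩ | ⟨z₁, z₂, hz₁u, hz₂v, hzz, hcz₁⟩
    · exact absurd hcz.left_mem.2 (by simp)
    · exact absurd hcz.left_mem.2 (by simp)
    · have hcz₂ : ConnIn G S c z₂ := hcz₁.trans (hzz.mono hsub2)
      refine ⟨z₁, ⟨hcz₁, hz₁u⟩, z₂, ⟨hcz₂, hz₂v⟩, ?_⟩
      have := conv2 hzz hcz₁
      exact this.mono (fun w hw => hw.1)
  -- trichotomy
  have htrich : ∀ h ∈ cls G S c, h ≠ c →
      (∃ z ∈ {z | ConnIn G S c z ∧ G.Adj u z}, ConnIn G (cls G S c \ {h}) c z) ∨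
      (∃ z ∈ {z | ConnIn G S c z ∧ G.Adj v z}, ConnIn G (cls G S c \ {h}) c z) ∨
      (∃ m₁ ∈ {z | ConnIn G S c z ∧ G.Adj u z}, ∃ m₂ ∈ {z | ConnIn G S c z ∧ G.Adj v z},
        ConnIn G ((cls G S c \ {c}) \ {h}) m₁ m₂) := by
    intro h hhH hhc
    have hha : h ≠ a := fun e => hsac ((e ▸ hhH : ConnIn G S c a)).symm
    have hhb : h ≠ b := fun e => hsbc ((e ▸ hhH : ConnIn G S c b)).symm
    have hfromc : ∀ {x : V}, x = a ∨ x = b → ¬ ConnIn G S c x →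
        ConnIn G (Ws \ {h}) c x →
        (∃ z ∈ {z | ConnIn G S c z ∧ G.Adj u z}, ConnIn G (cls G S c \ {h}) c z) ∨
        (∃ z ∈ {z | ConnIn G S c z ∧ G.Adj v z}, ConnIn G (cls G S c \ {h}) c z) := by
      intro x _ hsep hcon
      obtain ⟨p, hp⟩ := hcon
      have hcR : c ∉ ({u, v} : Set V) := by simp [hcu, hcv]
      have hsubh : ((Ws \ {h}) \ ({u, v} : Set V)) ⊆ S \ {h} := by
        intro z hz
        exact ⟨⟨hz.1.1, hz.2⟩, hz.1.2⟩
      rcases connIn_elim_first (R := {u, v}) p hp hcR with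
        hclean | ⟨hh', hh'mem, z, hz, hadjz, _, _, _⟩
      · exact absurd ((hclean.mono hsubh).mono Set.diff_subset) hsep
      · have hzS : ConnIn G (S \ {h}) c z := hz.mono hsubh
        simp only [Set.mem_insert_iff, Set.mem_singleton_iff] at hh'mem
        rcases hh'mem with rfl | rfl
        · exact Or.inl ⟨z, ⟨hzS.mono Set.diff_subset, hadjz.symm⟩, conv1 hzS⟩
        · exact Or.inr ⟨z, ⟨hzS.mono Set.diff_subset, hadjz.symm⟩, conv1 hzS⟩
    rcases hyp3_pair hyp h with hcab | hcac | hcbc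
    · rcases mid_uv hSdef hadj hnolink hQa' hPb' hbu.symm hsab hau hav hcab with
        ⟨z, hcz, hzu⟩ | ⟨z, hcz, hzv⟩ | ⟨z₁, z₂, hz₁u, hz₂v, hzz, hcz₁⟩
      · exact Or.inl ⟨z, ⟨hcz.mono Set.diff_subset, hzu⟩, conv1 hcz⟩
      · exact Or.inr (Or.inl ⟨z, ⟨hcz.mono Set.diff_subset, hzv⟩, conv1 hcz⟩)
      · have hcz₂ : ConnIn G S c z₂ := hcz₁.trans (hzz.mono hsub2)
        exact Or.inr (Or.inr ⟨z₁, ⟨hcz₁, hz₁u⟩, z₂, ⟨hcz₂, hz₂v⟩, conv2 hzz hcz₁⟩)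
    · rcases hfromc (Or.inl rfl) (fun hx => hsac hx.symm) hcac.symm with h' | h'
      · exact Or.inl h'
      · exact Or.inr (Or.inl h')
    · rcases hfromc (Or.inr rfl) (fun hx => hsbc hx.symm) hcbc.symm with h' | h'
      · exact Or.inl h'
      · exact Or.inr (Or.inl h')
  exact constr_bad hSu hSv huv haS hbS hcS hsab hsac hsbc hPa hQb
    (core (cls_mem hcS) (cls_conn hcS) htrich hbase)

theorem case_uv [Fintype V] {Ws : Set V} {a b c u v : V}
    (hab : a ≠ b) (hac : a ≠ c) (hbc : b ≠ c)
    (hau : a ≠ u) (hbu : b ≠ u) (hcu : c ≠ u)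
    (hav : a ≠ v) (hbv : b ≠ v) (hcv : c ≠ v)
    (huv : u ≠ v)
    (hyp : Hyp3 G Ws a b c)
    (hsab : ¬ ConnIn G (Ws \ ({u, v} : Set V)) a b)
    (hsac : ¬ ConnIn G (Ws \ ({u, v} : Set V)) a c)
    (hsbc : ¬ ConnIn G (Ws \ ({u, v} : Set V)) b c) :
    RootedK3 G a b c := by
  set S : Set V := Ws \ ({u, v} : Set V) with hSdef
  have hSu : u ∉ S := by simp [hSdef]
  have hSv : v ∉ S := by simp [hSdef]
  have hbWs : b ∈ Ws := (hyp3_at_root hyp).left_mem.1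
  have hcWs : c ∈ Ws := (hyp3_at_root hyp).right_mem.1
  have haWs : a ∈ Ws := (hyp3_at_root hyp.swap12).left_mem.1
  have haS : a ∈ S := ⟨haWs, by simp [hau, hav]⟩
  have hbS : b ∈ S := ⟨hbWs, by simp [hbu, hbv]⟩
  have hcS : c ∈ S := ⟨hcWs, by simp [hcu, hcv]⟩
  have hsym : ∀ {x y : V}, ¬ ConnIn G S x y → ¬ ConnIn G S y x :=
    fun h h' => h h'.symm
  have hsub_v : ((Ws \ {v}) \ ({u} : Set V)) ⊆ S := fun z hz => ⟨hz.1.1, by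
    simp only [Set.mem_insert_iff, Set.mem_singleton_iff]
    push_neg
    exact ⟨hz.2, hz.1.2⟩⟩
  have hsub_u : ((Ws \ {u}) \ ({v} : Set V)) ⊆ S := fun z hz => ⟨hz.1.1, by
    simp only [Set.mem_insert_iff, Set.mem_singleton_iff]
    push_neg
    exact ⟨hz.1.2, hz.2⟩⟩
  have att_u : ∀ {x y : V}, ¬ ConnIn G S x y → x ≠ u → ConnIn G (Ws \ {v}) x y →
      Att G S u x := by
    intro x y hsep hxu hcon
    obtain ⟨p, hp⟩ := hcon
    rcases connIn_elim_first (R := {u}) p hp (by simp [hxu]) with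
      hclean | ⟨hh, hhm, z, hz, hadj, _⟩
    · exact absurd (hclean.mono hsub_v) hsep
    · simp only [Set.mem_singleton_iff] at hhm
      subst hhm
      exact ⟨z, hz.mono hsub_v, hadj⟩
  have att_v : ∀ {x y : V}, ¬ ConnIn G S x y → x ≠ v → ConnIn G (Ws \ {u}) x y →
      Att G S v x := by
    intro x y hsep hxv hcon
    obtain ⟨p, hp⟩ := hcon
    rcases connIn_elim_first (R := {v}) p hp (by simp [hxv]) with
      hclean | ⟨hh, hhm, z, hz, hadj, _⟩
    · exact absurd (hclean.mono hsub_u) hsep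
    · simp only [Set.mem_singleton_iff] at hhm
      subst hhm
      exact ⟨z, hz.mono hsub_u, hadj⟩
  have attuv : ∀ {x y r : V}, ¬ ConnIn G S x y → x ≠ u → x ≠ v →
      ConnIn G (Ws \ {r}) x y → Att G S u x ∨ Att G S v x := by
    intro x y r hsep hxu hxv hcon
    obtain ⟨p, hp⟩ := hcon
    have hsub_r : ((Ws \ {r}) \ ({u, v} : Set V)) ⊆ S := fun z hz => ⟨hz.1.1, hz.2⟩
    rcases connIn_elim_first (R := {u, v}) p hp (by simp [hxu, hxv]) with
      hclean | ⟨hh, hhm, z, hz, hadj, _⟩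
    · exact absurd (hclean.mono hsub_r) hsep
    · simp only [Set.mem_insert_iff, Set.mem_singleton_iff] at hhm
      rcases hhm with rfl | rfl
      · exact Or.inl ⟨z, hz.mono hsub_r, hadj⟩
      · exact Or.inr ⟨z, hz.mono hsub_r, hadj⟩
  have hPP : (Att G S u a ∧ Att G S u b) ∨ (Att G S u a ∧ Att G S u c) ∨
      (Att G S u b ∧ Att G S u c) := by
    rcases hyp3_pair hyp v with h | h | h
    · exact Or.inl ⟨att_u hsab hau h, att_u (hsym hsab) hbu h.symm⟩
    · exact Or.inr (Or.inl ⟨att_u hsac hau h, att_u (hsym hsac) hcu h.symm⟩)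
    · exact Or.inr (Or.inr ⟨att_u hsbc hbu h, att_u (hsym hsbc) hcu h.symm⟩)
  have hQQ : (Att G S v a ∧ Att G S v b) ∨ (Att G S v a ∧ Att G S v c) ∨
      (Att G S v b ∧ Att G S v c) := by
    rcases hyp3_pair hyp u with h | h | h
    · exact Or.inl ⟨att_v hsab hav h, att_v (hsym hsab) hbv h.symm⟩
    · exact Or.inr (Or.inl ⟨att_v hsac hav h, att_v (hsym hsac) hcv h.symm⟩)
    · exact Or.inr (Or.inr ⟨att_v hsbc hbv h, att_v (hsym hsbc) hcv h.symm⟩)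
  have hPQa : Att G S u a ∨ Att G S v a :=
    attuv hsac hau hav (hyp3_at_root hyp.swap12)
  have hPQb : Att G S u b ∨ Att G S v b :=
    attuv hsbc hbu hbv (hyp3_at_root hyp)
  have hPQc : Att G S u c ∨ Att G S v c :=
    attuv (hsym hsbc) hcu hcv (hyp3_at_root hyp).symm
  rcases hPP with ⟨hPa, hPb⟩ | ⟨hPa, hPc⟩ | ⟨hPb, hPc⟩ <;>
    rcases hQQ with ⟨hQa, hQb⟩ | ⟨hQa, hQc⟩ | ⟨hQb, hQc⟩
  · -- P{a,b} Q{a,b}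
    rcases hPQc with hPc | hQc
    · exact constr_A hSv hSu huv.symm haS hbS hcS hsab hsac hsbc hQa hQb hPa hPb hPc
    · exact constr_A hSu hSv huv haS hbS hcS hsab hsac hsbc hPa hPb hQa hQb hQc
  · -- P{a,b} Q{a,c}
    by_cases hPc : Att G S u c
    · exact (constr_A hSv hSu huv.symm haS hcS hbS hsac hsab (hsym hsbc)
        hQa hQc hPa hPc hPb).swap23
    · by_cases hQb : Att G S v b
      · exact constr_A hSu hSv huv haS hbS hcS hsab hsac hsbc hPa hPb hQa hQb hQc
      · exact (case_uv_bad hbu hcu hau hbv hcv hav huv hbWs hcWs haWs hyp.cycle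
          hsbc (hsym hsab) (hsym hsac) hPb hQb hPc hQc hPa hQa).cycle.cycle
  · -- P{a,b} Q{b,c}
    by_cases hPc : Att G S u c
    · exact (constr_A hSv hSu huv.symm hbS hcS haS hsbc (hsym hsab) (hsym hsac)
        hQb hQc hPb hPc hPa).cycle.cycle
    · by_cases hQa : Att G S v a
      · exact constr_A hSu hSv huv haS hbS hcS hsab hsac hsbc hPa hPb hQa hQb hQc
      · exact (case_uv_bad hau hcu hbu hav hcv hbv huv haWs hcWs hbWs hyp.swap23
          hsac hsab (hsym hsbc) hPa hQa hPc hQc hPb hQb).swap23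
  · -- P{a,c} Q{a,b}
    by_cases hQc : Att G S v c
    · exact (constr_A hSu hSv huv haS hcS hbS hsac hsab (hsym hsbc)
        hPa hPc hQa hQc hQb).swap23
    · by_cases hPb : Att G S u b
      · exact constr_A hSv hSu huv.symm haS hbS hcS hsab hsac hsbc hQa hQb hPa hPb hPc
      · exact (case_uv_bad hcu hbu hau hcv hbv hav huv hcWs hbWs haWs hyp.cycle.swap12
          (hsym hsbc) (hsym hsac) (hsym hsab) hPc hQc hPb hQb hPa hQa).cycle.swap12
  · -- P{a,c} Q{a,c}
    rcases hPQb with hPb | hQb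
    · exact (constr_A hSv hSu huv.symm haS hcS hbS hsac hsab (hsym hsbc)
        hQa hQc hPa hPc hPb).swap23
    · exact (constr_A hSu hSv huv haS hcS hbS hsac hsab (hsym hsbc)
        hPa hPc hQa hQc hQb).swap23
  · -- P{a,c} Q{b,c}
    by_cases hPb : Att G S u b
    · exact (constr_A hSv hSu huv.symm hbS hcS haS hsbc (hsym hsab) (hsym hsac)
        hQb hQc hPb hPc hPa).cycle.cycle
    · by_cases hQa : Att G S v a
      · exact (constr_A hSu hSv huv haS hcS hbS hsac hsab (hsym hsbc)
          hPa hPc hQa hQc hQb).swap23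
      · exact case_uv_bad hau hbu hcu hav hbv hcv huv haWs hbWs hcWs hyp
          hsab hsac hsbc hPa hQa hPb hQb hPc hQc
  · -- P{b,c} Q{a,b}
    by_cases hQc : Att G S v c
    · exact (constr_A hSu hSv huv hbS hcS haS hsbc (hsym hsab) (hsym hsac)
        hPb hPc hQb hQc hQa).cycle.cycle
    · by_cases hPa : Att G S u a
      · exact constr_A hSv hSu huv.symm haS hbS hcS hsab hsac hsbc hQa hQb hPa hPb hPc
      · exact (case_uv_bad hcu hau hbu hcv hav hbv huv hcWs haWs hbWs hyp.cycle.cycle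
          (hsym hsac) (hsym hsbc) hsab hPc hQc hPa hQa hPb hQb).cycle
  · -- P{b,c} Q{a,c}
    by_cases hQb : Att G S v b
    · exact (constr_A hSu hSv huv hbS hcS haS hsbc (hsym hsab) (hsym hsac)
        hPb hPc hQb hQc hQa).cycle.cycle
    · by_cases hPa : Att G S u a
      · exact (constr_A hSv hSu huv.symm haS hcS hbS hsac hsab (hsym hsbc)
          hQa hQc hPa hPc hPb).swap23
      · exact (case_uv_bad hbu hau hcu hbv hav hcv huv hbWs haWs hcWs hyp.swap12
          (hsym hsab) hsbc hsac hPb hQb hPa hQa hPc hQc).swap12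
  · -- P{b,c} Q{b,c}
    rcases hPQa with hPa | hQa
    · exact (constr_A hSv hSu huv.symm hbS hcS haS hsbc (hsym hsab) (hsym hsac)
        hQb hQc hPb hPc hPa).cycle.cycle
    · exact (constr_A hSu hSv huv hbS hcS haS hsbc (hsym hsab) (hsym hsac)
        hPb hPc hQb hQc hQa).cycle.cycle

/-- Good case for the root-hub configuration: `b`'s side already reaches `c`. -/
theorem constr_ur_good {S' : Set V} {a b c v : V}
    (hSv : v ∉ S') (hSc : c ∉ S') (hvc : v ≠ c)
    (ha : a ∈ S') (hb : b ∈ S')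
    (hsab : ¬ ConnIn G S' a b)
    (hattva : Att G S' v a) (hattvb : Att G S' v b) (hattca : Att G S' c a)
    (hbcadj : ∃ y, (y ∈ cls G S' b ∨ y = v) ∧ G.Adj y c) :
    RootedK3 G a b c := by
  obtain ⟨za, hza, hzav⟩ := hattva
  obtain ⟨zb, hzb, hzbv⟩ := hattvb
  obtain ⟨wa, hwa, hwac⟩ := hattca
  obtain ⟨y, hy, hyc⟩ := hbcadj
  refine ⟨cls G S' a, cls G S' b ∪ {v}, {c},
    cls_mem ha, Or.inl (cls_mem hb), rfl, ?_, ?_, ?_,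
    cls_conn ha, cls_hub_conn hb hzb hzbv, singleton_pairconn c c rfl,
    ⟨za, hza, v, Or.inr rfl, hzav⟩,
    ⟨wa, hwa, c, rfl, hwac⟩,
    ⟨y, hy, c, rfl, hyc⟩⟩
  · rw [Set.disjoint_union_right]
    exact ⟨cls_disj hsab, cls_disj_singleton hSv⟩
  · exact cls_disj_singleton hSc
  · rw [Set.disjoint_union_left]
    exact ⟨cls_disj_singleton hSc, Set.disjoint_singleton_left.mpr (by simp [hvc])⟩

theorem constr_ur_L {S' : Set V} {a b c v z₁ z₂ : V}
    (hSv : v ∉ S') (hSc : c ∉ S') (hvc : v ≠ c)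
    (ha : a ∈ S') (hb : b ∈ S')
    (hsab : ¬ ConnIn G S' a b)
    (hattva : Att G S' v a) (hattvb : Att G S' v b) (hattca : Att G S' c a)
    (hz₁v : G.Adj v z₁) (hz₂c : G.Adj c z₂) (hlink : ConnIn G S' z₁ z₂)
    (hda : ¬ ConnIn G S' a z₁) (hdb : ¬ ConnIn G S' b z₁) :
    RootedK3 G a b c := by
  obtain ⟨za, hza, hzav⟩ := hattva
  obtain ⟨zb, hzb, hzbv⟩ := hattvb
  obtain ⟨wa, hwa, hwac⟩ := hattca
  have hz₁S : z₁ ∈ S' := hlink.left_mem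
  refine ⟨cls G S' a, (cls G S' b ∪ {v}) ∪ cls G S' z₁, {c},
    cls_mem ha, Or.inl (Or.inl (cls_mem hb)), rfl, ?_, ?_, ?_,
    cls_conn ha, ?_, singleton_pairconn c c rfl,
    ⟨za, hza, v, Or.inl (Or.inr rfl), hzav⟩,
    ⟨wa, hwa, c, rfl, hwac⟩,
    ⟨z₂, Or.inr hlink, c, rfl, hz₂c.symm⟩⟩
  · rw [Set.disjoint_union_right, Set.disjoint_union_right]
    exact ⟨⟨cls_disj hsab, cls_disj_singleton hSv⟩, cls_disj hda⟩
  · exact cls_disj_singleton hSc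
  · rw [Set.disjoint_union_left, Set.disjoint_union_left]
    exact ⟨⟨cls_disj_singleton hSc, Set.disjoint_singleton_left.mpr (by simp [hvc])⟩,
      cls_disj_singleton hSc⟩
  · exact setConn_union (Or.inl (cls_mem hb)) (cls_hub_conn hb hzb hzbv)
      (cls_pairconn hz₁S) (fun _ => ⟨z₁, cls_mem hz₁S, v, Or.inr rfl, hz₁v.symm⟩)

theorem constr_ur_bad {S' : Set V} {a b c v : V}
    (hSv : v ∉ S') (hSc : c ∉ S') (hvc : v ≠ c)
    (ha : a ∈ S') (hb : b ∈ S')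
    (hsab : ¬ ConnIn G S' a b)
    (hattvb : Att G S' v b)
    (hout : CoreOut G (cls G S' a) {z | ConnIn G S' a z ∧ G.Adj v z}
      {z | ConnIn G S' a z ∧ G.Adj c z} a) :
    RootedK3 G a b c := by
  obtain ⟨zb, hzb, hzbv⟩ := hattvb
  obtain ⟨T, X, Y, hTH, hXH, hYH, hkT, hTconn, hdTX, hdTY, hdXY,
    hXconn, hYconn, hXN₁, hYN₂, hE1, hE2, hE3⟩ := hout
  have hXa : X ⊆ cls G S' a := fun z hz => (hXH hz).1
  have hYa : Y ⊆ cls G S' a := fun z hz => (hYH hz).1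
  have hTS : ∀ z ∈ T, z ∈ S' := fun z hz => (hTH hz).right_mem
  have hXS : ∀ z ∈ X, z ∈ S' := fun z hz => (hXa hz).right_mem
  have hYS : ∀ z ∈ Y, z ∈ S' := fun z hz => (hYa hz).right_mem
  refine ⟨T, (cls G S' b ∪ {v}) ∪ X, {c} ∪ Y,
    hkT, Or.inl (Or.inl (cls_mem hb)), Or.inl rfl, ?_, ?_, ?_,
    fun x hx => hTconn x hx, ?_, ?_, ?_, ?_, ?_⟩
  · rw [Set.disjoint_left]
    rintro z hz ((hz' | hz') | hz')
    · exact hsab ((hTH hz).symm.symm.trans hz'.symm).symm.symm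
    · exact hSv (hz' ▸ hTS z hz)
    · exact Set.disjoint_left.mp hdTX hz hz'
  · rw [Set.disjoint_left]
    rintro z hz (hz' | hz')
    · exact hSc (hz' ▸ hTS z hz)
    · exact Set.disjoint_left.mp hdTY hz hz'
  · rw [Set.disjoint_left]
    rintro z ((hz | hz) | hz) (hz' | hz')
    · exact hSc (hz' ▸ hz.right_mem)
    · exact hsab ((hYa hz').symm.symm.trans hz.symm).symm.symm
    · exact hvc (hz.symm.trans hz')
    · exact hSv (hz ▸ hYS z hz')
    · exact hSc (hz' ▸ hXS z hz)
    · exact Set.disjoint_left.mp hdXY hz hz'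
  · refine setConn_union (Or.inl (cls_mem hb)) (cls_hub_conn hb hzb hzbv)
      hXconn (fun hne => ?_)
    obtain ⟨x₀, hx₀X, hx₀N⟩ := hXN₁ hne
    exact ⟨x₀, hx₀X, v, Or.inr rfl, hx₀N.2.symm⟩
  · refine setConn_union rfl (singleton_pairconn c c rfl) hYconn (fun hne => ?_)
    obtain ⟨y₀, hy₀Y, hy₀N⟩ := hYN₂ hne
    exact ⟨y₀, hy₀Y, c, rfl, hy₀N.2.symm⟩
  · rcases hE1 with ⟨t, htT, htN⟩ | ⟨t, htT, x, hxX, hadj⟩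
    · exact ⟨t, htT, v, Or.inl (Or.inr rfl), htN.2.symm⟩
    · exact ⟨t, htT, x, Or.inr hxX, hadj⟩
  · rcases hE2 with ⟨t, htT, htN⟩ | ⟨t, htT, y, hyY, hadj⟩
    · exact ⟨t, htT, c, Or.inl rfl, htN.2.symm⟩
    · exact ⟨t, htT, y, Or.inr hyY, hadj⟩
  · rcases hE3 with ⟨x, hx, y, hy, hadj⟩ | ⟨x, hxX, hxN⟩ | ⟨y, hyY, hyN⟩
    · exact ⟨x, Or.inr hx, y, Or.inr hy, hadj⟩
    · exact ⟨x, Or.inr hxX, c, Or.inl rfl, hxN.2.symm⟩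
    · exact ⟨v, Or.inl (Or.inr rfl), y, Or.inr hyY, hyN.2⟩

theorem from_v_ur {Ws S' : Set V} {a b c v h : V} (hS : S' = Ws \ ({v, c} : Set V))
    (hnadj : ¬ G.Adj v c)
    (hnolink : ∀ z₁ z₂, G.Adj v z₁ → G.Adj c z₂ → ConnIn G S' z₁ z₂ →
      ConnIn G S' a z₁ ∨ ConnIn G S' b z₁)
    (hAcb : ¬ Att G S' c b) (hvc : v ≠ c) :
    ∀ (n : ℕ) (q : G.Walk v c), q.length ≤ n → (∀ z ∈ q.support, z ∈ Ws \ {h}) →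
    ((∃ z, ConnIn G (S' \ {h}) a z ∧ G.Adj v z) ∨
     (∃ z, ConnIn G (S' \ {h}) a z ∧ G.Adj c z) ∨
     (∃ z₁ z₂, G.Adj v z₁ ∧ G.Adj c z₂ ∧ ConnIn G ((S' \ {a}) \ {h}) z₁ z₂ ∧
       ConnIn G S' a z₁)) := by
  have hsub : ((Ws \ {h}) \ ({v, c} : Set V)) ⊆ S' \ {h} := by
    intro z hz
    exact ⟨hS ▸ ⟨hz.1.1, hz.2⟩, hz.1.2⟩
  have hsubS : S' \ {h} ⊆ S' := Set.diff_subset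
  intro n
  induction n with
  | zero =>
    intro q hlen _
    cases q with
    | nil => exact absurd rfl hvc
    | cons e q₁ => simp at hlen
  | succ n ih =>
    intro q hlen hsupp
    cases q with
    | nil => exact absurd rfl hvc
    | @cons _ w _ e q₁ =>
      have hwv : w ≠ v := e.ne'
      by_cases hwc : w = c
      · exact absurd (hwc ▸ e) hnadj
      have hq₁supp : ∀ z ∈ q₁.support, z ∈ Ws \ {h} := fun z hz => hsupp z (by simp [hz])
      have hwR : w ∉ ({v, c} : Set V) := by simp [hwv, hwc]
      rcases connIn_elim_first (R := {v, c}) q₁ hq₁supp hwR with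
        hclean | ⟨hubv, hhub, z₂, hz₂, hadj₂, q₂, hq₂supp, hlen₂⟩
      · exact absurd hclean.right_mem.2 (by simp)
      · simp only [Set.mem_insert_iff, Set.mem_singleton_iff] at hhub
        rcases hhub with rfl | rfl
        · refine ih q₂ ?_ hq₂supp
          have : q₁.length + 1 ≤ n + 1 := by simpa using hlen
          omega
        · have hz₂S : ConnIn G (S' \ {h}) w z₂ := hz₂.mono hsub
          have hwz₂ : ConnIn G S' w z₂ := hz₂S.mono hsubS
          rcases hnolink w z₂ e hadj₂.symm hwz₂ with hcw | hcw
          · obtain ⟨r, hr⟩ := hz₂S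
            by_cases har : a ∈ r.support
            · exact Or.inl ⟨w, (connIn_to_support r hr har).symm, e⟩
            · exact Or.inr (Or.inr ⟨w, z₂, e, hadj₂.symm,
                ⟨r, fun z hz => ⟨⟨(hr z hz).1, fun hza => har (hza ▸ hz)⟩, (hr z hz).2⟩⟩, hcw⟩)
          · exact absurd ⟨z₂, hcw.trans hwz₂, hadj₂⟩ hAcb

theorem mid_ur {Ws S' : Set V} {a b c v h : V} (hS : S' = Ws \ ({v, c} : Set V))
    (hnadj : ¬ G.Adj v c)
    (hnolink : ∀ z₁ z₂, G.Adj v z₁ → G.Adj c z₂ → ConnIn G S' z₁ z₂ →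
      ConnIn G S' a z₁ ∨ ConnIn G S' b z₁)
    (hAcb : ¬ Att G S' c b) (hvc : v ≠ c) (hbv : b ≠ v) (hbc : b ≠ c)
    (hcon : ConnIn G (Ws \ {h}) b c) :
    ((∃ z, ConnIn G (S' \ {h}) a z ∧ G.Adj v z) ∨
     (∃ z, ConnIn G (S' \ {h}) a z ∧ G.Adj c z) ∨
     (∃ z₁ z₂, G.Adj v z₁ ∧ G.Adj c z₂ ∧ ConnIn G ((S' \ {a}) \ {h}) z₁ z₂ ∧
       ConnIn G S' a z₁)) := by
  have hsub : ((Ws \ {h}) \ ({v, c} : Set V)) ⊆ S' \ {h} := by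
    intro z hz
    exact ⟨hS ▸ ⟨hz.1.1, hz.2⟩, hz.1.2⟩
  have hsubS : S' \ {h} ⊆ S' := Set.diff_subset
  obtain ⟨p, hp⟩ := hcon
  have hbR : b ∉ ({v, c} : Set V) := by simp [hbv, hbc]
  rcases connIn_elim_first (R := {v, c}) p hp hbR with
    hclean | ⟨hubv, hhub, z, hz, hadjz, q, hqsupp, _⟩
  · exact absurd hclean.right_mem.2 (by simp)
  · simp only [Set.mem_insert_iff, Set.mem_singleton_iff] at hhub
    rcases hhub with rfl | rfl
    · exact from_v_ur hS hnadj hnolink hAcb hvc q.length q le_rfl hqsupp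
    · exact absurd ⟨z, (hz.mono hsub).mono hsubS, hadjz⟩ hAcb

theorem case_ur_bad [Fintype V] {Ws : Set V} {a b c v : V}
    (hab : a ≠ b) (hac : a ≠ c) (hbc : b ≠ c)
    (hav : a ≠ v) (hbv : b ≠ v) (hcv : c ≠ v)
    (haWs : a ∈ Ws) (hbWs : b ∈ Ws)
    (hyp : Hyp3 G Ws a b c)
    (hsab : ¬ ConnIn G (Ws \ ({v, c} : Set V)) a b)
    (hattvb : Att G (Ws \ ({v, c} : Set V)) v b)
    (hattca : Att G (Ws \ ({v, c} : Set V)) c a)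
    (hAcb : ¬ Att G (Ws \ ({v, c} : Set V)) c b)
    (hnadj : ¬ G.Adj v c)
    (hnolink : ∀ z₁ z₂, G.Adj v z₁ → G.Adj c z₂ →
      ConnIn G (Ws \ ({v, c} : Set V)) z₁ z₂ →
      ConnIn G (Ws \ ({v, c} : Set V)) a z₁ ∨ ConnIn G (Ws \ ({v, c} : Set V)) b z₁) :
    RootedK3 G a b c := by
  set S' : Set V := Ws \ ({v, c} : Set V) with hSdef
  have hSv : v ∉ S' := by simp [hSdef]
  have hSc : c ∉ S' := by simp [hSdef]
  have haS : a ∈ S' := ⟨haWs, by simp [hav, hac]⟩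
  have hbS : b ∈ S' := ⟨hbWs, by simp [hbv, hbc]⟩
  have hvc : v ≠ c := fun e => hcv e.symm
  have conv1 : ∀ {h z : V}, ConnIn G (S' \ {h}) a z → ConnIn G (cls G S' a \ {h}) a z :=
    fun {h z} haz => haz.restrict (fun w hw => ⟨hw.mono Set.diff_subset, hw.right_mem.2⟩)
  have hsub2 : ∀ {h : V}, ((S' \ {a}) \ {h} : Set V) ⊆ S' :=
    fun {h} => Set.Subset.trans Set.diff_subset Set.diff_subset
  have conv2 : ∀ {h z₁ z₂ : V}, ConnIn G ((S' \ {a}) \ {h}) z₁ z₂ → ConnIn G S' a z₁ →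
      ConnIn G ((cls G S' a \ {a}) \ {h}) z₁ z₂ :=
    fun {h z₁ z₂} hzz haz₁ => hzz.restrict (fun w hw =>
      ⟨⟨haz₁.trans (hw.mono hsub2), hw.right_mem.1.2⟩, hw.right_mem.2⟩)
  have hbase : ∃ m₁ ∈ {z | ConnIn G S' a z ∧ G.Adj v z},
      ∃ m₂ ∈ {z | ConnIn G S' a z ∧ G.Adj c z}, ConnIn G (cls G S' a \ {a}) m₁ m₂ := by
    rcases mid_ur hSdef hnadj hnolink hAcb hvc hbv hbc (hyp3_at_root hyp) with
      ⟨z, haz, _⟩ | ⟨z, haz, _⟩ | ⟨z₁, z₂, hz₁v, hz₂c, hzz, haz₁⟩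
    · exact absurd haz.left_mem.2 (by simp)
    · exact absurd haz.left_mem.2 (by simp)
    · have haz₂ : ConnIn G S' a z₂ := haz₁.trans (hzz.mono hsub2)
      refine ⟨z₁, ⟨haz₁, hz₁v⟩, z₂, ⟨haz₂, hz₂c⟩, ?_⟩
      exact (conv2 hzz haz₁).mono (fun w hw => hw.1)
  have htrich : ∀ h ∈ cls G S' a, h ≠ a →
      (∃ z ∈ {z | ConnIn G S' a z ∧ G.Adj v z}, ConnIn G (cls G S' a \ {h}) a z) ∨
      (∃ z ∈ {z | ConnIn G S' a z ∧ G.Adj c z}, ConnIn G (cls G S' a \ {h}) a z) ∨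
      (∃ m₁ ∈ {z | ConnIn G S' a z ∧ G.Adj v z}, ∃ m₂ ∈ {z | ConnIn G S' a z ∧ G.Adj c z},
        ConnIn G ((cls G S' a \ {a}) \ {h}) m₁ m₂) := by
    intro h hhH hha
    have hfroma : ConnIn G (Ws \ {h}) a b ∨ ConnIn G (Ws \ {h}) a c →
        (∃ z ∈ {z | ConnIn G S' a z ∧ G.Adj v z}, ConnIn G (cls G S' a \ {h}) a z) ∨
        (∃ z ∈ {z | ConnIn G S' a z ∧ G.Adj c z}, ConnIn G (cls G S' a \ {h}) a z) := by
      intro hcon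
      have hsubh : ((Ws \ {h}) \ ({v, c} : Set V)) ⊆ S' \ {h} := by
        intro z hz
        exact ⟨⟨hz.1.1, hz.2⟩, hz.1.2⟩
      have haR : a ∉ ({v, c} : Set V) := by simp [hav, hac]
      rcases hcon with hcon | hcon
      all_goals {
        obtain ⟨p, hp⟩ := hcon
        rcases connIn_elim_first (R := {v, c}) p hp haR with
          hclean | ⟨hh', hh'mem, z, hz, hadjz, _, _, _⟩
        · first
          | exact absurd ((hclean.mono hsubh).mono Set.diff_subset) hsab
          | exact absurd hclean.right_mem.2 (by simp)
        · have hzS : ConnIn G (S' \ {h}) a z := hz.mono hsubh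
          simp only [Set.mem_insert_iff, Set.mem_singleton_iff] at hh'mem
          rcases hh'mem with rfl | rfl
          · exact Or.inl ⟨z, ⟨hzS.mono Set.diff_subset, hadjz.symm⟩, conv1 hzS⟩
          · exact Or.inr ⟨z, ⟨hzS.mono Set.diff_subset, hadjz.symm⟩, conv1 hzS⟩ }
    rcases hyp3_pair hyp h with hcab | hcac | hcbc
    · rcases hfroma (Or.inl hcab) with h' | h'
      · exact Or.inl h'
      · exact Or.inr (Or.inl h')
    · rcases hfroma (Or.inr hcac) with h' | h'
      · exact Or.inl h'
      · exact Or.inr (Or.inl h')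
    · rcases mid_ur hSdef hnadj hnolink hAcb hvc hbv hbc hcbc with
        ⟨z, haz, hzv⟩ | ⟨z, haz, hzc⟩ | ⟨z₁, z₂, hz₁v, hz₂c, hzz, haz₁⟩
      · exact Or.inl ⟨z, ⟨haz.mono Set.diff_subset, hzv⟩, conv1 haz⟩
      · exact Or.inr (Or.inl ⟨z, ⟨haz.mono Set.diff_subset, hzc⟩, conv1 haz⟩)
      · have haz₂ : ConnIn G S' a z₂ := haz₁.trans (hzz.mono hsub2)
        exact Or.inr (Or.inr ⟨z₁, ⟨haz₁, hz₁v⟩, z₂, ⟨haz₂, hz₂c⟩, conv2 hzz haz₁⟩)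
  exact constr_ur_bad hSv hSc hvc haS hbS hsab hattvb
    (core (cls_mem haS) (cls_conn haS) htrich hbase)

/-- The root-hub case, given that `c` attaches to `a`'s side. -/
theorem case_ur' [Fintype V] {Ws : Set V} {a b c v : V}
    (hab : a ≠ b) (hac : a ≠ c) (hbc : b ≠ c)
    (hav : a ≠ v) (hbv : b ≠ v) (hcv : c ≠ v)
    (haWs : a ∈ Ws) (hbWs : b ∈ Ws)
    (hyp : Hyp3 G Ws a b c)
    (hsab : ¬ ConnIn G (Ws \ ({v, c} : Set V)) a b)
    (hattva : Att G (Ws \ ({v, c} : Set V)) v a)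
    (hattvb : Att G (Ws \ ({v, c} : Set V)) v b)
    (hattca : Att G (Ws \ ({v, c} : Set V)) c a) :
    RootedK3 G a b c := by
  set S' : Set V := Ws \ ({v, c} : Set V) with hSdef
  have hSv : v ∉ S' := by simp [hSdef]
  have hSc : c ∉ S' := by simp [hSdef]
  have haS : a ∈ S' := ⟨haWs, by simp [hav, hac]⟩
  have hbS : b ∈ S' := ⟨hbWs, by simp [hbv, hbc]⟩
  have hvc : v ≠ c := fun e => hcv e.symm
  by_cases hadjvc : G.Adj v c
  · exact constr_ur_good hSv hSc hvc haS hbS hsab hattva hattvb hattca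
      ⟨v, Or.inr rfl, hadjvc⟩
  by_cases hAcb : Att G S' c b
  · obtain ⟨zb, hzb, hzbc⟩ := hAcb
    exact constr_ur_good hSv hSc hvc haS hbS hsab hattva hattvb hattca
      ⟨zb, Or.inl hzb, hzbc⟩
  by_cases hlink : ∃ z₁ z₂, G.Adj v z₁ ∧ G.Adj c z₂ ∧ ConnIn G S' z₁ z₂ ∧
      ¬ ConnIn G S' a z₁ ∧ ¬ ConnIn G S' b z₁
  · obtain ⟨z₁, z₂, h1, h2, h3, h4, h5⟩ := hlink
    exact constr_ur_L hSv hSc hvc haS hbS hsab hattva hattvb hattca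
      h1 h2 h3 h4 h5
  have hnolink : ∀ z₁ z₂, G.Adj v z₁ → G.Adj c z₂ → ConnIn G S' z₁ z₂ →
      ConnIn G S' a z₁ ∨ ConnIn G S' b z₁ := by
    intro z₁ z₂ h1 h2 h3
    by_contra hcon
    push_neg at hcon
    exact hlink ⟨z₁, z₂, h1, h2, h3, hcon.1, hcon.2⟩
  exact case_ur_bad hab hac hbc hav hbv hcv haWs hbWs hyp hsab hattvb hattca hAcb
    hadjvc hnolink

theorem case_ur [Fintype V] {Ws : Set V} {a b c v : V}
    (hab : a ≠ b) (hac : a ≠ c) (hbc : b ≠ c)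
    (hav : a ≠ v) (hbv : b ≠ v) (hcv : c ≠ v)
    (hyp : Hyp3 G Ws a b c)
    (hsab : ¬ ConnIn G (Ws \ ({v, c} : Set V)) a b) :
    RootedK3 G a b c := by
  set S' : Set V := Ws \ ({v, c} : Set V) with hSdef
  have hbWs : b ∈ Ws := (hyp3_at_root hyp).left_mem.1
  have haWs : a ∈ Ws := (hyp3_at_root hyp.swap12).left_mem.1
  have hsym : ¬ ConnIn G S' b a := fun h => hsab h.symm
  -- attachments of v from the pair avoiding c
  have hsub_c : ((Ws \ {c}) \ ({v} : Set V)) ⊆ S' := fun z hz => ⟨hz.1.1, by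
    simp only [Set.mem_insert_iff, Set.mem_singleton_iff]
    push_neg
    exact ⟨hz.2, hz.1.2⟩⟩
  have att_v : ∀ {x y : V}, ¬ ConnIn G S' x y → x ≠ v → ConnIn G (Ws \ {c}) x y →
      Att G S' v x := by
    intro x y hsep hxv hcon
    obtain ⟨p, hp⟩ := hcon
    rcases connIn_elim_first (R := {v}) p hp (by simp [hxv]) with
      hclean | ⟨hh, hhm, z, hz, hadj, _⟩
    · exact absurd (hclean.mono hsub_c) hsep
    · simp only [Set.mem_singleton_iff] at hhm
      subst hhm
      exact ⟨z, hz.mono hsub_c, hadj⟩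
  have hconab : ConnIn G (Ws \ {c}) a b := by
    rcases hyp3_pair hyp c with h | h | h
    · exact h
    · exact absurd h.right_mem.2 (by simp)
    · exact absurd h.right_mem.2 (by simp)
  have hattva : Att G S' v a := att_v hsab hav hconab
  have hattvb : Att G S' v b := att_v hsym hbv hconab.symm
  -- attachment of c to a's or b's side, from the pair avoiding v
  have hsub_v : ((Ws \ {v}) \ ({c} : Set V)) ⊆ S' := fun z hz => ⟨hz.1.1, by
    simp only [Set.mem_insert_iff, Set.mem_singleton_iff]
    push_neg
    exact ⟨hz.1.2, hz.2⟩⟩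
  have att_c : ∀ {x y : V}, ¬ ConnIn G S' x y → x ≠ c → ConnIn G (Ws \ {v}) x y →
      Att G S' c x := by
    intro x y hsep hxc hcon
    obtain ⟨p, hp⟩ := hcon
    rcases connIn_elim_first (R := {c}) p hp (by simp [hxc]) with
      hclean | ⟨hh, hhm, z, hz, hadj, _⟩
    · exact absurd (hclean.mono hsub_v) hsep
    · simp only [Set.mem_singleton_iff] at hhm
      subst hhm
      exact ⟨z, hz.mono hsub_v, hadj⟩
  have hSc : c ∉ S' := by simp [hSdef]
  have hattc : Att G S' c a ∨ Att G S' c b := by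
    rcases hyp3_pair hyp v with h | h | h
    · exact Or.inl (att_c hsab hac h)
    · exact Or.inl (att_c (fun h' => hSc h'.right_mem) hac h)
    · exact Or.inr (att_c (fun h' => hSc h'.right_mem) hbc h)
  rcases hattc with hca | hcb
  · exact case_ur' hab hac hbc hav hbv hcv haWs hbWs hyp hsab hattva hattvb hca
  · exact (case_ur' (Ne.symm hab) hbc hac hbv hav hcv hbWs haWs hyp.swap12
      hsym hattvb hattva hcb).swap12

theorem constr_triangle {a b c : V} (hab : a ≠ b) (hac : a ≠ c) (hbc : b ≠ c)
    (eab : G.Adj a b) (eac : G.Adj a c) (ebc : G.Adj b c) : RootedK3 G a b c := by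
  refine ⟨{a}, {b}, {c}, rfl, rfl, rfl, ?_, ?_, ?_,
    fun x hx => singleton_pairconn a a rfl x hx,
    fun x hx => singleton_pairconn b b rfl x hx,
    fun x hx => singleton_pairconn c c rfl x hx,
    ⟨a, rfl, b, rfl, eab⟩, ⟨a, rfl, c, rfl, eac⟩, ⟨b, rfl, c, rfl, ebc⟩⟩
  · simp [hab]
  · simp [hac]
  · simp [hbc]

theorem main_aux [Fintype V] :
    ∀ (n : ℕ) (Ws : Set V) (a b c : V), Ws.ncard ≤ n → a ≠ b → a ≠ c → b ≠ c →
      Hyp3 G Ws a b c → RootedK3 G a b c := by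
  intro n
  induction n with
  | zero =>
    intro Ws a b c hcard hab hac hbc hyp
    exfalso
    have haWs : a ∈ Ws := (hyp3_at_root hyp.swap12).left_mem.1
    have : 0 < Ws.ncard := (Set.ncard_pos (Set.toFinite _)).mpr ⟨a, haWs⟩
    omega
  | succ n ih =>
    intro Ws a b c hcard hab hac hbc hyp
    by_cases hdel : ∃ w ∈ Ws, w ≠ a ∧ w ≠ b ∧ w ≠ c ∧ Hyp3 G (Ws \ {w}) a b c
    · obtain ⟨w, hwWs, _, _, _, hyp'⟩ := hdel
      refine ih (Ws \ {w}) a b c ?_ hab hac hbc hyp'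
      have hss : Ws \ {w} ⊂ Ws := by
        refine ⟨Set.diff_subset, fun hsub => ?_⟩
        exact (hsub hwWs).2 rfl
      have := Set.ncard_lt_ncard hss (Set.toFinite _)
      omega
    · by_cases hroots : ∀ w ∈ Ws, w = a ∨ w = b ∨ w = c
      · have ebc : G.Adj b c := by
          refine connIn_adj_pair (hyp3_at_root hyp) hbc (fun z hz => ?_)
          rcases hroots z hz.1 with rfl | rfl | rfl
          · exact absurd hz.2 (by simp)
          · exact Or.inl rfl
          · exact Or.inr rfl
        have eac : G.Adj a c := by
          refine connIn_adj_pair (hyp3_at_root hyp.swap12) hac (fun z hz => ?_)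
          rcases hroots z hz.1 with rfl | rfl | rfl
          · exact Or.inl rfl
          · exact absurd hz.2 (by simp)
          · exact Or.inr rfl
        have eab : G.Adj a b := by
          refine connIn_adj_pair (hyp3_at_root hyp.cycle.cycle) hab (fun z hz => ?_)
          rcases hroots z hz.1 with rfl | rfl | rfl
          · exact Or.inl rfl
          · exact Or.inr rfl
          · exact absurd hz.2 (by simp)
        exact constr_triangle hab hac hbc eab eac ebc
      · push_neg at hroots
        obtain ⟨v, hvWs, hva, hvb, hvc⟩ := hroots
        push_neg at hdel
        have hnohyp : ¬ Hyp3 G (Ws \ {v}) a b c := hdel v hvWs hva hvb hvc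
        unfold Hyp3 at hnohyp
        push_neg at hnohyp
        obtain ⟨u, hu⟩ := hnohyp
        -- if u is not in Ws \ {v}, contradiction with Hyp3 at v
        by_cases huW : u ∈ Ws \ {v}
        · have husep : ∀ x y : V, (x = a ∨ x = b ∨ x = c) → (y = a ∨ y = b ∨ y = c) →
              x ≠ y → ¬ ConnIn G ((Ws \ {v}) \ {u}) x y := hu
          have hsub' : (Ws \ ({v, u} : Set V)) ⊆ (Ws \ {v}) \ {u} := by
            intro z hz
            refine ⟨⟨hz.1, fun e => hz.2 ?_⟩, fun e => hz.2 ?_⟩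
            · rw [Set.mem_singleton_iff] at e; simp [e]
            · rw [Set.mem_singleton_iff] at e; simp [e]
          have hsep : ∀ x y : V, (x = a ∨ x = b ∨ x = c) → (y = a ∨ y = b ∨ y = c) →
              x ≠ y → ¬ ConnIn G (Ws \ ({v, u} : Set V)) x y :=
            fun x y dx dy dxy h => husep x y dx dy dxy (h.mono hsub')
          by_cases hua : u = a
          · subst hua
            exact (case_ur hbc (Ne.symm hab) (Ne.symm hac)
              (Ne.symm hvb) (Ne.symm hvc) (Ne.symm hva) hyp.cycle
              (hsep b c (Or.inr (Or.inl rfl)) (Or.inr (Or.inr rfl)) hbc)).cycle.cycle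
          by_cases hub : u = b
          · subst hub
            exact (case_ur hac hab (Ne.symm hbc)
              (Ne.symm hva) (Ne.symm hvc) (Ne.symm hvb) hyp.swap23
              (hsep a c (Or.inl rfl) (Or.inr (Or.inr rfl)) hac)).swap23
          by_cases huc : u = c
          · subst huc
            exact case_ur hab hac hbc
              (Ne.symm hva) (Ne.symm hvb) (Ne.symm hvc) hyp
              (hsep a b (Or.inl rfl) (Or.inr (Or.inl rfl)) hab)
          · have hsub'' : (Ws \ ({u, v} : Set V)) ⊆ Ws \ ({v, u} : Set V) := by
              intro z hz
              refine ⟨hz.1, fun e => hz.2 ?_⟩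
              rcases e with e | e
              · exact Or.inr e
              · exact Or.inl e
            have hsep2 : ∀ x y : V, (x = a ∨ x = b ∨ x = c) → (y = a ∨ y = b ∨ y = c) →
                x ≠ y → ¬ ConnIn G (Ws \ ({u, v} : Set V)) x y :=
              fun x y dx dy dxy h => hsep x y dx dy dxy (h.mono hsub'')
            exact case_uv hab hac hbc
              (fun e => hua e.symm) (fun e => hub e.symm) (fun e => huc e.symm)
              (Ne.symm hva) (Ne.symm hvb) (Ne.symm hvc) (fun e => huW.2 (e ▸ rfl))
              hyp
              (hsep2 a b (Or.inl rfl) (Or.inr (Or.inl rfl)) hab)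
              (hsep2 a c (Or.inl rfl) (Or.inr (Or.inr rfl)) hac)
              (hsep2 b c (Or.inr (Or.inl rfl)) (Or.inr (Or.inr rfl)) hbc)
        · exfalso
          obtain ⟨x, y, hx, hy, hxy, hcon⟩ := hyp v
          refine hu x y hx hy hxy (hcon.mono (fun z hz => ⟨hz, fun he => ?_⟩))
          exact huW (by rw [Set.mem_singleton_iff] at he; exact he ▸ hz)
  

end AuxRootedK3

/-- If for every vertex `v` at least two of `a, b, c` lie in a common component of
`G − v` (i.e. are joined by a walk avoiding `v`), then `G` has an
`{a,b,c}`-rooted `K₃`-minor. -/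
theorem stmt3 {V : Type*} [Fintype V] (G : SimpleGraph V) (a b c : V)
    (hab : a ≠ b) (hac : a ≠ c) (hbc : b ≠ c)
    (h : ∀ v : V, ∃ x ∈ ({a, b, c} : Set V), ∃ y ∈ ({a, b, c} : Set V),
      x ≠ y ∧ ∃ p : G.Walk x y, v ∉ p.support) :
    ∃ B : Fin 3 → Set V, IsKMinor G 3 B ∧
      ∀ i, (B i ∩ ({a, b, c} : Set V)).Nonempty := by
  classical
  have hyp : Hyp3 G Set.univ a b c := by
    intro v
    obtain ⟨x, hx, y, hy, hxy, p, hp⟩ := h v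
    refine ⟨x, y, ?_, ?_, hxy, ⟨p, fun z hz => ⟨trivial, fun he => ?_⟩⟩⟩
    · simpa using hx
    · simpa using hy
    · rw [Set.mem_singleton_iff] at he
      exact hp (he ▸ hz)
  have hr : RootedK3 G a b c :=
    main_aux (Set.univ.ncard) Set.univ a b c le_rfl hab hac hbc hyp
  exact hr.toMinor
end

section
/- Call a pair (G, S), where G is a finite simple graph and S ⊆ V(G), a counterexample if χ(G) = 4, S is colorful in G, and G contains no S-rooted K_4-minor. If (G, S) is a counterexample with |V(G)| minimum among all counterexamples, then G is 2-connected, i.e. |V(G)| ≥ 3 and G has no separation of order at most 1. -/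
open SimpleGraph

/-- `(G, S)` is a counterexample: `χ(G) = 4`, `S` is colorful in `G`, and `G` has
no `S`-rooted `K₄`-minor. -/
def Counterexample {V : Type} (G : SimpleGraph V) (S : Set V) : Prop :=
  G.chromaticNumber = 4 ∧
  (∀ c : G.Coloring (Fin 4), ∀ k : Fin 4, ∃ v ∈ S, c v = k) ∧
  ¬ ∃ B : Fin 4 → Set V, IsKMinor G 4 B ∧ ∀ i, (B i ∩ S).Nonempty

/-! ### Auxiliary decidable facts about `Fin 4` -/

set_option maxRecDepth 10000 in
lemma fin4_inj2 : ∀ m b k a : Fin 4, m ≠ b → k ≠ a →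
    ∃ f : Fin 4 → Fin 4, Function.Injective f ∧ f m = k ∧ f b = a := by decide

set_option maxRecDepth 10000 in
lemma fin4_fix : ∀ m k : Fin 4, ∃ f : Fin 4 → Fin 4, Function.Injective f ∧ f m = k := by decide

set_option maxRecDepth 10000 in
lemma fin3_inj : ∀ (j : Fin 3) (k a : Fin 4), k ≠ a →
    ∃ f : Fin 3 → Fin 4, Function.Injective f ∧ f j = a ∧ ∀ i, f i ≠ k := by decide

set_option maxRecDepth 10000 in
lemma fin3_inj' : ∀ k : Fin 4, ∃ f : Fin 3 → Fin 4, Function.Injective f ∧ ∀ i, f i ≠ k := by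
  decide

/-! ### Coloring helpers -/

/-- recolor a coloring along an injective map -/
def recolor {W : Type} {H : SimpleGraph W} {n m : ℕ} (c : H.Coloring (Fin n))
    (f : Fin n → Fin m) (hf : Function.Injective f) : H.Coloring (Fin m) :=
  Coloring.mk (fun x => f (c x)) (fun h he => c.valid h (hf he))

/-- restrict a coloring to an induced subgraph -/
def restrictColoring {V : Type} {G : SimpleGraph V} {α : Type} (c : G.Coloring α) (X : Set V) :
    (G.induce X).Coloring α :=
  Coloring.mk (fun x => c x.1) (fun h => c.valid h)

lemma induce_colorable {V : Type} {G : SimpleGraph V} (h : G.Colorable 4) (X : Set V) :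
    (G.induce X).Colorable 4 :=
  ⟨recolor (restrictColoring h.some X) id fun _ _ => id⟩

lemma chrom_three {W : Type} {H : SimpleGraph W} (h4 : H.Colorable 4)
    (hne : H.chromaticNumber ≠ 4) : H.Colorable 3 := by
  by_contra h3
  have hle : H.chromaticNumber ≤ 4 := h4.chromaticNumber_le
  have hgt : ¬ H.chromaticNumber ≤ 3 := fun h => h3 (chromaticNumber_le_iff_colorable.mp h)
  push_neg at hgt
  apply hne
  refine le_antisymm hle ?_
  have : ((3 : ℕ) : ℕ∞) + 1 ≤ H.chromaticNumber := Order.add_one_le_of_lt hgt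
  have h34 : ((3 : ℕ) : ℕ∞) + 1 = 4 := by norm_num
  rw [h34] at this
  exact this

/-- produce a coloring missing color `k` on `T`, with no vertex constraint -/
lemma miss_color {W : Type} {H : SimpleGraph W} (T : Set W) (h4 : H.Colorable 4)
    (hnP : ¬ (H.chromaticNumber = 4 ∧ ∀ c : H.Coloring (Fin 4), ∀ k : Fin 4, ∃ v ∈ T, c v = k))
    (k : Fin 4) : ∃ c : H.Coloring (Fin 4), ∀ x ∈ T, c x ≠ k := by
  by_cases hchi : H.chromaticNumber = 4
  · have hcolf : ¬ ∀ c : H.Coloring (Fin 4), ∀ k : Fin 4, ∃ v ∈ T, c v = k := by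
      intro h; exact hnP ⟨hchi, h⟩
    push_neg at hcolf
    obtain ⟨c0, m, hm⟩ := hcolf
    obtain ⟨f, hfinj, hfm⟩ := fin4_fix m k
    refine ⟨recolor c0 f hfinj, fun x hx heq => ?_⟩
    exact hm x hx (hfinj (heq.trans hfm.symm))
  · obtain ⟨c3⟩ := chrom_three h4 hchi
    obtain ⟨f, hfinj, hf⟩ := fin3_inj' k
    exact ⟨recolor c3 f hfinj, fun x _ => hf (c3 x)⟩

/-- produce a coloring missing `k` on `T` with value `a` at `v ∈ T`, when `k ≠ a` -/
lemma miss_color_at {W : Type} {H : SimpleGraph W} (T : Set W) (v : W) (hvT : v ∈ T)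
    (h4 : H.Colorable 4)
    (hnP : ¬ (H.chromaticNumber = 4 ∧ ∀ c : H.Coloring (Fin 4), ∀ k : Fin 4, ∃ v ∈ T, c v = k))
    (k a : Fin 4) (hka : k ≠ a) :
    ∃ c : H.Coloring (Fin 4), c v = a ∧ ∀ x ∈ T, c x ≠ k := by
  by_cases hchi : H.chromaticNumber = 4
  · have hcolf : ¬ ∀ c : H.Coloring (Fin 4), ∀ k : Fin 4, ∃ v ∈ T, c v = k := by
      intro h; exact hnP ⟨hchi, h⟩
    push_neg at hcolf
    obtain ⟨c0, m, hm⟩ := hcolf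
    have hmv : m ≠ c0 v := fun h => hm v hvT h.symm
    obtain ⟨f, hfinj, hfm, hfb⟩ := fin4_inj2 m (c0 v) k a hmv hka
    exact ⟨recolor c0 f hfinj, hfb, fun x hx heq => hm x hx (hfinj (heq.trans hfm.symm))⟩
  · obtain ⟨c3⟩ := chrom_three h4 hchi
    obtain ⟨f, hfinj, hfv, hf⟩ := fin3_inj (c3 v) k a hka
    exact ⟨recolor c3 f hfinj, hfv, fun x _ => hf (c3 x)⟩

/-- combine colorings of the two sides of a separation that agree on the overlap -/
lemma combine_colorings {V : Type} {G : SimpleGraph V} (A B : Set V) (hU : A ∪ B = Set.univ)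
    (hE : ∀ a ∈ A \ B, ∀ b ∈ B \ A, ¬ G.Adj a b)
    (cA : (G.induce A).Coloring (Fin 4)) (cB : (G.induce B).Coloring (Fin 4))
    (hagree : ∀ x (hA : x ∈ A) (hB : x ∈ B), cA ⟨x, hA⟩ = cB ⟨x, hB⟩) :
    ∃ c : G.Coloring (Fin 4), (∀ x (hA : x ∈ A), c x = cA ⟨x, hA⟩) ∧
      (∀ x (hB : x ∈ B), c x = cB ⟨x, hB⟩) := by
  classical
  have hmem : ∀ x : V, x ∉ A → x ∈ B := by
    intro x hx
    have : x ∈ A ∪ B := hU ▸ Set.mem_univ x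
    exact this.resolve_left hx
  refine ⟨Coloring.mk (fun x => if h : x ∈ A then cA ⟨x, h⟩ else cB ⟨x, hmem x h⟩) ?_, ?_, ?_⟩
  · intro x y hxy heq
    by_cases hxA : x ∈ A <;> by_cases hyA : y ∈ A <;> simp only [hxA, hyA, dif_pos, dif_neg] at heq
    · exact cA.valid (by exact hxy : (G.induce A).Adj ⟨x, hxA⟩ ⟨y, hyA⟩) heq
    · by_cases hxB : x ∈ B
      · rw [hagree x hxA hxB] at heq
        exact cB.valid (by exact hxy : (G.induce B).Adj ⟨x, hxB⟩ ⟨y, hmem y hyA⟩) heq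
      · exact hE x ⟨hxA, hxB⟩ y ⟨hmem y hyA, hyA⟩ hxy
    · by_cases hyB : y ∈ B
      · rw [hagree y hyA hyB] at heq
        exact cB.valid (by exact hxy : (G.induce B).Adj ⟨x, hmem x hxA⟩ ⟨y, hyB⟩) heq
      · exact hE y ⟨hyA, hyB⟩ x ⟨hmem x hxA, hxA⟩ hxy.symm
    · exact cB.valid (by exact hxy : (G.induce B).Adj ⟨x, hmem x hxA⟩ ⟨y, hmem y hyA⟩) heq
  · intro x hA; exact dif_pos hA
  · intro x hB
    by_cases hA : x ∈ A
    · exact (dif_pos hA).trans (hagree x hA hB)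
    · exact dif_neg hA

/-! ### Minor helpers -/

lemma induce_image_connected {V : Type} {G : SimpleGraph V} (X : Set V) (s : Set ↥X)
    (h : ((G.induce X).induce s).Connected) : (G.induce (Subtype.val '' s)).Connected := by
  have e : (G.induce X).induce s ≃g G.induce (Subtype.val '' s) := by
    refine ⟨Equiv.Set.image Subtype.val s Subtype.val_injective, ?_⟩
    intro a b
    simp [Equiv.Set.image, Equiv.Set.imageOfInjOn]
  exact e.connected_iff.mp h

lemma isKMinor_lift {V : Type} {G : SimpleGraph V} (X : Set V) (B : Fin 4 → Set ↥X)
    (h : IsKMinor (G.induce X) 4 B) : IsKMinor G 4 (fun i => Subtype.val '' B i) := by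
  obtain ⟨hne, hdisj, hconn, hadj⟩ := h
  refine ⟨fun i => (hne i).image _, fun i j hij => ?_,
    fun i => induce_image_connected X _ (hconn i), fun i j hij => ?_⟩
  · exact (Set.disjoint_image_iff Subtype.val_injective).mpr (hdisj i j hij)
  · obtain ⟨x, hx, y, hy, hxy⟩ := hadj i j hij
    exact ⟨x, Set.mem_image_of_mem _ hx, y, Set.mem_image_of_mem _ hy, hxy⟩

/-! ### Minimality helpers -/

section Min

variable {V : Type} [Fintype V] {G : SimpleGraph V} {S : Set V}

lemma exists_rooted_minor
    (hmin : ∀ (W : Type) [Fintype W] (H : SimpleGraph W) (T : Set W),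
      Counterexample H T → Fintype.card V ≤ Fintype.card W)
    (X : Set V) (x0 : V) (hx0 : x0 ∉ X) (T : Set ↥X)
    (hchi : (G.induce X).chromaticNumber = 4)
    (hcolf : ∀ c : (G.induce X).Coloring (Fin 4), ∀ k : Fin 4, ∃ v ∈ T, c v = k) :
    ∃ B : Fin 4 → Set ↥X, IsKMinor (G.induce X) 4 B ∧ ∀ i, (B i ∩ T).Nonempty := by
  classical
  by_contra h
  have hce' : Counterexample (G.induce X) T := ⟨hchi, hcolf, h⟩
  have h1 := hmin ↥X (G.induce X) T hce'
  have h2 : Fintype.card ↥X < Fintype.card V := Fintype.card_subtype_lt hx0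
  omega

lemma side_contradiction
    (hnom : ¬ ∃ B : Fin 4 → Set V, IsKMinor G 4 B ∧ ∀ i, (B i ∩ S).Nonempty)
    (hmin : ∀ (W : Type) [Fintype W] (H : SimpleGraph W) (T : Set W),
      Counterexample H T → Fintype.card V ≤ Fintype.card W)
    (X : Set V) (x0 : V) (hx0 : x0 ∉ X)
    (hchi : (G.induce X).chromaticNumber = 4)
    (hcolf : ∀ c : (G.induce X).Coloring (Fin 4), ∀ k : Fin 4,
      ∃ v ∈ (Subtype.val ⁻¹' S : Set ↥X), c v = k) : False := by
  obtain ⟨B, hB, hroot⟩ := exists_rooted_minor hmin X x0 hx0 _ hchi hcolf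
  refine hnom ⟨fun i => Subtype.val '' B i, isKMinor_lift X B hB, fun i => ?_⟩
  obtain ⟨x, hxB, hxS⟩ := hroot i
  exact ⟨↑x, Set.mem_image_of_mem _ hxB, hxS⟩

lemma min_ce_connected (hce : Counterexample G S)
    (hmin : ∀ (W : Type) [Fintype W] (H : SimpleGraph W) (T : Set W),
      Counterexample H T → Fintype.card V ≤ Fintype.card W) : G.Connected := by
  classical
  obtain ⟨hchi, hcolf, hnom⟩ := hce
  have h4 : G.Colorable 4 := chromaticNumber_le_iff_colorable.mp hchi.le
  have hne : Nonempty V := by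
    by_contra h
    rw [not_nonempty_iff] at h
    rw [G.chromaticNumber_eq_zero_of_isEmpty] at hchi
    exact absurd hchi (by decide)
  rw [connected_iff]
  refine ⟨fun u w => ?_, hne⟩
  by_contra hreach
  set A : Set V := {x | G.Reachable u x} with hA
  have huA : u ∈ A := Reachable.refl u
  have hwA : w ∉ A := hreach
  have hclosed : ∀ x ∈ A, ∀ y, G.Adj x y → y ∈ A := fun x hx y hxy => hx.trans hxy.reachable
  have hside : ∀ X : Set V, ∀ x0, x0 ∉ X →
      ¬ ((G.induce X).chromaticNumber = 4 ∧ ∀ c : (G.induce X).Coloring (Fin 4), ∀ k : Fin 4,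
        ∃ v ∈ (Subtype.val ⁻¹' S : Set ↥X), c v = k) := by
    rintro X x0 hx0 ⟨h1, h2⟩
    exact side_contradiction hnom hmin X x0 hx0 h1 h2
  obtain ⟨cA, hcA⟩ := miss_color (Subtype.val ⁻¹' S : Set ↥A) (induce_colorable h4 A)
      (hside A w hwA) 0
  obtain ⟨cB, hcB⟩ := miss_color (Subtype.val ⁻¹' S : Set ↥(Aᶜ)) (induce_colorable h4 Aᶜ)
      (hside Aᶜ u (by simp [huA])) 0
  obtain ⟨c, hcl, hcr⟩ := combine_colorings A Aᶜ (Set.union_compl_self A)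
    (fun a ha b hb hab => hb.1 (hclosed a ha.1 b hab)) cA cB
    (fun x hx hx' => absurd hx hx')
  obtain ⟨s, hsS, hs0⟩ := hcolf c 0
  by_cases hsA : s ∈ A
  · exact hcA ⟨s, hsA⟩ hsS ((hcl s hsA).symm.trans hs0)
  · exact hcB ⟨s, hsA⟩ hsS ((hcr s hsA).symm.trans hs0)

/-- staying inside `B` while walking to the cut vertex `v` -/
lemma reach_in_side {A B : Set V} {v : V}
    (hU : A ∪ B = Set.univ) (hABv : A ∩ B = {v})
    (hE : ∀ a ∈ A \ B, ∀ b ∈ B \ A, ¬ G.Adj a b) :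
    ∀ (x : V) (p : G.Walk x v) (hx : x ∈ B) (hv : v ∈ B),
      (G.induce B).Reachable ⟨x, hx⟩ ⟨v, hv⟩ := by
  suffices hgen : ∀ (x y : V) (p : G.Walk x y), y = v → ∀ (hx : x ∈ B) (hv : v ∈ B),
      (G.induce B).Reachable ⟨x, hx⟩ ⟨v, hv⟩ by
    intro x p hx hv; exact hgen x v p rfl hx hv
  intro x y p
  induction p with
  | nil => rintro rfl hx hv; rfl
  | @cons x y w h q ih =>
    intro hwv hx hv
    subst hwv
    by_cases hxv : x = w
    · subst hxv; rfl
    · have hxA : x ∉ A := by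
        intro hA
        apply hxv
        have h' := Set.mem_inter hA hx
        rw [hABv] at h'
        exact h'
      have hyB : y ∈ B := by
        by_cases hyB : y ∈ B
        · exact hyB
        · have hyA : y ∈ A := ((hU ▸ Set.mem_univ y : y ∈ A ∪ B)).resolve_right hyB
          exact absurd h.symm (hE y ⟨hyA, hyB⟩ x ⟨hx, hxA⟩)
      exact (Adj.reachable (by exact h : (G.induce B).Adj ⟨x, hx⟩ ⟨y, hyB⟩)).trans
        (ih rfl hyB hv)

/-- the key one-sided argument for a cut vertex -/
lemma one_side
    (hcolf : ∀ c : G.Coloring (Fin 4), ∀ k : Fin 4, ∃ v ∈ S, c v = k)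
    (hnom : ¬ ∃ B : Fin 4 → Set V, IsKMinor G 4 B ∧ ∀ i, (B i ∩ S).Nonempty)
    (hmin : ∀ (W : Type) [Fintype W] (H : SimpleGraph W) (T : Set W),
      Counterexample H T → Fintype.card V ≤ Fintype.card W)
    (hconn : G.Connected) (h4 : G.Colorable 4)
    (A B : Set V) (v : V)
    (hU : A ∪ B = Set.univ) (hE : ∀ a ∈ A \ B, ∀ b ∈ B \ A, ¬ G.Adj a b)
    (hBA : (B \ A).Nonempty) (hABv : A ∩ B = {v})
    (hchiA : (G.induce A).chromaticNumber = 4)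
    (hcolfA : ∀ c : (G.induce A).Coloring (Fin 4), ∀ k : Fin 4,
      ∃ x ∈ (Subtype.val ⁻¹' (S ∪ {v}) : Set ↥A), c x = k) : False := by
  classical
  have hvAB : v ∈ A ∩ B := hABv ▸ rfl
  have hvA : v ∈ A := hvAB.1
  have hvB : v ∈ B := hvAB.2
  obtain ⟨b0, hb0B, hb0A⟩ := hBA
  -- the rooted minor on side A
  obtain ⟨B', hB', hroot⟩ := exists_rooted_minor hmin A b0 hb0A
    (Subtype.val ⁻¹' (S ∪ {v})) hchiA hcolfA
  set C : Fin 4 → Set V := fun i => Subtype.val '' B' i with hC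
  have hCK : IsKMinor G 4 C := isKMinor_lift A B' hB'
  have hCA : ∀ i, C i ⊆ A := by
    rintro i _ ⟨x, _, rfl⟩; exact x.2
  -- S is not contained in A
  have hsnotA : ∃ s ∈ S, s ∉ A := by
    by_contra h
    push_neg at h
    apply side_contradiction hnom hmin A b0 hb0A hchiA
    intro cA k
    obtain ⟨cB0⟩ := induce_colorable h4 B
    obtain ⟨f, hfinj, hf⟩ := fin4_fix (cB0 ⟨v, hvB⟩) (cA ⟨v, hvA⟩)
    have hagree : ∀ x (hxA : x ∈ A) (hxB : x ∈ B),
        cA ⟨x, hxA⟩ = (recolor cB0 f hfinj) ⟨x, hxB⟩ := by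
      intro x hxA hxB
      have hxv : x = v := by
        have h' := Set.mem_inter hxA hxB
        rw [hABv] at h'
        exact h'
      subst hxv
      exact hf.symm
    obtain ⟨c, hcl, _⟩ := combine_colorings A B hU hE cA (recolor cB0 f hfinj) hagree
    obtain ⟨s, hsS, hsk⟩ := hcolf c k
    exact ⟨⟨s, h s hsS⟩, hsS, ((hcl s (h s hsS)).symm.trans hsk)⟩
  obtain ⟨s, hsS, hsA⟩ := hsnotA
  have hsB : s ∈ B := ((hU ▸ Set.mem_univ s : s ∈ A ∪ B)).resolve_left hsA
  -- if every branch set already meets S, we are done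
  by_cases hall : ∀ i, (C i ∩ S).Nonempty
  · exact hnom ⟨C, hCK, hall⟩
  push_neg at hall
  obtain ⟨i0, hi0S⟩ := hall
  have hvCi0 : v ∈ C i0 := by
    obtain ⟨x, hxB, hxSv⟩ := hroot i0
    rcases hxSv with hxS | hxv
    · exact absurd (Set.mem_inter (Set.mem_image_of_mem _ hxB) hxS) (by
        rw [hi0S]; exact Set.notMem_empty _)
    · have : (x : V) = v := hxv
      rw [← this]; exact Set.mem_image_of_mem _ hxB
  -- connect v to s within B
  obtain ⟨p⟩ := hconn s v
  obtain ⟨q⟩ := reach_in_side hU hABv hE s p hsB hvB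
  set P : Set V := Subtype.val '' {x : ↥B | x ∈ q.support} with hP
  have hPconn : (G.induce P).Connected := induce_image_connected B _ (by
    exact q.connected_induce_support)
  have hsP : s ∈ P := ⟨⟨s, hsB⟩, q.start_mem_support, rfl⟩
  have hvP : v ∈ P := ⟨⟨v, hvB⟩, q.end_mem_support, rfl⟩
  have hPB : P ⊆ B := by rintro _ ⟨x, _, rfl⟩; exact x.2
  obtain ⟨hCne, hCdisj, hCconn, hCadj⟩ := hCK
  -- the modified minor
  set D : Fin 4 → Set V := fun i => if i = i0 then C i0 ∪ P else C i with hD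
  have hDi0 : D i0 = C i0 ∪ P := by rw [hD]; simp
  have hDof : ∀ i, i ≠ i0 → D i = C i := by intro i hi; rw [hD]; simp [hi]
  have hDsup : ∀ i, C i ⊆ D i := by
    intro i
    by_cases hi : i = i0
    · subst hi; rw [hDi0]; exact Set.subset_union_left
    · rw [hDof i hi]
  have key : ∀ j, j ≠ i0 → Disjoint (C i0 ∪ P) (C j) := by
    intro j hj
    rw [Set.disjoint_union_left]
    refine ⟨hCdisj i0 j (fun h => hj h.symm), Set.disjoint_left.mpr ?_⟩
    intro x hxP hxC
    have hxA : x ∈ A := hCA j hxC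
    have hxv : x = v := by
      have h' := Set.mem_inter hxA (hPB hxP)
      rw [hABv] at h'
      exact h'
    subst hxv
    exact Set.disjoint_left.mp (hCdisj i0 j (fun h => hj h.symm)) hvCi0 hxC
  have hDdisj : ∀ i j, i ≠ j → Disjoint (D i) (D j) := by
    intro i j hij
    by_cases hi : i = i0 <;> by_cases hj : j = i0
    · exact absurd (hi.trans hj.symm) hij
    · subst hi; rw [hDi0, hDof j hj]; exact key j hj
    · subst hj; rw [hDi0, hDof i hi]; exact (key i hi).symm
    · rw [hDof i hi, hDof j hj]; exact hCdisj i j hij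
  have hDne : ∀ i, (D i).Nonempty := fun i => (hCne i).mono (hDsup i)
  have hDconn : ∀ i, (G.induce (D i)).Connected := by
    intro i
    by_cases hi : i = i0
    · subst hi; rw [hDi0]
      exact induce_union_connected (hCconn i).preconnected hPconn.preconnected ⟨v, hvCi0, hvP⟩
    · rw [hDof i hi]; exact hCconn i
  have hDadj : ∀ i j, i ≠ j → SetsAdjacent G (D i) (D j) := by
    intro i j hij
    obtain ⟨x, hx, y, hy, hxy⟩ := hCadj i j hij
    exact ⟨x, hDsup i hx, y, hDsup j hy, hxy⟩
  have hDroot : ∀ i, (D i ∩ S).Nonempty := by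
    intro i
    by_cases hi : i = i0
    · subst hi; rw [hDi0]
      exact ⟨s, Or.inr hsP, hsS⟩
    · rw [hDof i hi]
      obtain ⟨x, hxB, hxSv⟩ := hroot i
      rcases hxSv with hxS | hxv
      · exact ⟨↑x, Set.mem_image_of_mem _ hxB, hxS⟩
      · exfalso
        have hxv' : (x : V) = v := hxv
        have hvCi : v ∈ C i := hxv' ▸ Set.mem_image_of_mem _ hxB
        exact Set.disjoint_left.mp (hCdisj i i0 hi) hvCi hvCi0
  exact hnom ⟨D, ⟨hDne, hDdisj, hDconn, hDadj⟩, hDroot⟩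

end Min

/-- A vertex-minimum counterexample is 2-connected: it has at least 3 vertices
and every separation has order at least 2. -/
theorem stmt6 {V : Type} [Fintype V] (G : SimpleGraph V) (S : Set V)
    (hce : Counterexample G S)
    (hmin : ∀ (W : Type) [Fintype W] (H : SimpleGraph W) (T : Set W),
      Counterexample H T → Fintype.card V ≤ Fintype.card W) :
    3 ≤ Fintype.card V ∧
      ∀ A B : Set V, IsSeparation G A B → 2 ≤ (A ∩ B).ncard := by
  classical
  have hconn : G.Connected := min_ce_connected hce hmin
  obtain ⟨hchi, hcolf, hnom⟩ := hce
  have h4 : G.Colorable 4 := chromaticNumber_le_iff_colorable.mp hchi.le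
  constructor
  · -- at least 3 (indeed 4) vertices
    have hle : G.chromaticNumber ≤ (Fintype.card V : ℕ∞) :=
      (G.colorable_of_fintype).chromaticNumber_le
    rw [hchi] at hle
    have h4le : (4 : ℕ) ≤ Fintype.card V := by exact_mod_cast hle
    omega
  · intro A B hsep
    obtain ⟨hU, hAB, hBA, hE⟩ := hsep
    by_contra hlt
    push_neg at hlt
    interval_cases h : (A ∩ B).ncard
    · -- order 0 : contradicts connectivity
      have hABempty : A ∩ B = ∅ := (Set.ncard_eq_zero (Set.toFinite _)).mp h
      obtain ⟨a, haA, haB⟩ := hAB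
      obtain ⟨b, hbB, hbA⟩ := hBA
      obtain ⟨p⟩ := hconn a b
      obtain ⟨d, _, hdA, hdnA⟩ := p.exists_boundary_dart A haA hbA
      have hd2B : d.snd ∈ B := ((hU ▸ Set.mem_univ d.snd : d.snd ∈ A ∪ B)).resolve_left hdnA
      have hd1B : d.fst ∉ B := fun hB =>
        (Set.eq_empty_iff_forall_notMem.mp hABempty d.fst) ⟨hdA, hB⟩
      exact hE d.fst ⟨hdA, hd1B⟩ d.snd ⟨hd2B, hdnA⟩ d.adj
    · -- order 1 : cut vertex
      obtain ⟨v, hABv⟩ := (Set.ncard_eq_one).mp h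
      have hvA : v ∈ A := (hABv ▸ (rfl : v ∈ ({v} : Set V)) : v ∈ A ∩ B).1
      have hvB : v ∈ B := (hABv ▸ (rfl : v ∈ ({v} : Set V)) : v ∈ A ∩ B).2
      have hU' : B ∪ A = Set.univ := (Set.union_comm B A).trans hU
      have hE' : ∀ a ∈ B \ A, ∀ b ∈ A \ B, ¬ G.Adj a b :=
        fun x hx y hy hxy => hE y hy x hx hxy.symm
      have hBAv : B ∩ A = {v} := (Set.inter_comm B A).trans hABv
      by_cases hPA : (G.induce A).chromaticNumber = 4 ∧
          ∀ c : (G.induce A).Coloring (Fin 4), ∀ k : Fin 4,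
            ∃ x ∈ (Subtype.val ⁻¹' (S ∪ {v}) : Set ↥A), c x = k
      · exact one_side hcolf hnom hmin hconn h4 A B v hU hE hBA hABv hPA.1 hPA.2
      by_cases hPB : (G.induce B).chromaticNumber = 4 ∧
          ∀ c : (G.induce B).Coloring (Fin 4), ∀ k : Fin 4,
            ∃ x ∈ (Subtype.val ⁻¹' (S ∪ {v}) : Set ↥B), c x = k
      · exact one_side hcolf hnom hmin hconn h4 B A v hU' hE' hAB hBAv hPB.1 hPB.2
      · -- neither side works: build a coloring of G missing color 0 on S
        obtain ⟨cA, hcAv, hcA⟩ := miss_color_at (Subtype.val ⁻¹' (S ∪ {v}) : Set ↥A)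
          ⟨v, hvA⟩ (Or.inr rfl) (induce_colorable h4 A) hPA 0 1 (by decide)
        obtain ⟨cB, hcBv, hcB⟩ := miss_color_at (Subtype.val ⁻¹' (S ∪ {v}) : Set ↥B)
          ⟨v, hvB⟩ (Or.inr rfl) (induce_colorable h4 B) hPB 0 1 (by decide)
        have hagree : ∀ x (hxA : x ∈ A) (hxB : x ∈ B), cA ⟨x, hxA⟩ = cB ⟨x, hxB⟩ := by
          intro x hxA hxB
          have hxv : x = v := by
            have h' := Set.mem_inter hxA hxB
            rw [hABv] at h'
            exact h'
          subst hxv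
          exact hcAv.trans hcBv.symm
        obtain ⟨c, hcl, hcr⟩ := combine_colorings A B hU hE cA cB hagree
        obtain ⟨s, hsS, hs0⟩ := hcolf c 0
        by_cases hsA : s ∈ A
        · exact hcA ⟨s, hsA⟩ (Or.inl hsS) ((hcl s hsA).symm.trans hs0)
        · have hsB : s ∈ B := ((hU ▸ Set.mem_univ s : s ∈ A ∪ B)).resolve_left hsA
          exact hcB ⟨s, hsB⟩ (Or.inl hsS) ((hcr s hsB).symm.trans hs0)
end

section
/- Let G be a finite simple 3-connected graph and let (A,B) be a separation of G of order 3. Then both induced subgraphs G[A] and G[B] are connected. -/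
open SimpleGraph

lemma key_reach {V : Type*} [Fintype V] (G : SimpleGraph V)
    (h3conn : ∀ A' B' : Set V, IsSeparation G A' B' → 3 ≤ (A' ∩ B').ncard)
    (A B : Set V) (hsep : IsSeparation G A B) (horder : (A ∩ B).ncard = 3)
    (a : V) (ha : a ∈ A \ B) :
    ∀ s ∈ A ∩ B, ∃ hs : s ∈ A, (G.induce A).Reachable ⟨s, hs⟩ ⟨a, ha.1⟩ := by
  classical
  set C : Set V := {w | ∃ h : w ∈ A, (G.induce A).Reachable ⟨w, h⟩ ⟨a, ha.1⟩} with hC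
  have hCA : C ⊆ A := fun w hw => hw.1
  have haC : a ∈ C := ⟨ha.1, Reachable.refl _⟩
  have hsep' : IsSeparation G C ((A \ C) ∪ B) := by
    refine ⟨?_, ⟨a, haC, ?_⟩, ?_, ?_⟩
    · ext x
      simp only [Set.mem_union, Set.mem_diff, Set.mem_univ, iff_true]
      by_cases hx : x ∈ A
      · by_cases hxc : x ∈ C
        · exact Or.inl hxc
        · exact Or.inr (Or.inl ⟨hx, hxc⟩)
      · have : x ∈ A ∪ B := hsep.1 ▸ Set.mem_univ x
        exact Or.inr (Or.inr (this.resolve_left hx))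
    · rintro (⟨-, hac⟩ | hb)
      · exact hac haC
      · exact ha.2 hb
    · obtain ⟨b, hb⟩ := hsep.2.2.1
      exact ⟨b, Or.inr hb.1, fun hbc => hb.2 (hCA hbc)⟩
    · rintro x ⟨hxC, hxn⟩ y ⟨hy, hyC⟩ hadj
      have hxA : x ∈ A := hCA hxC
      have hxB : x ∉ B := fun hxB => hxn (Or.inr hxB)
      by_cases hyA : y ∈ A
      · apply hyC
        refine ⟨hyA, ?_⟩
        have hadj' : (G.induce A).Adj ⟨y, hyA⟩ ⟨x, hxA⟩ := by
          simp [comap_adj, hadj.symm]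
        exact hadj'.reachable.trans hxC.2
      · have hyB : y ∈ B := by
          rcases hy with h | h
          · exact absurd h.1 hyA
          · exact h
        exact hsep.2.2.2 x ⟨hxA, hxB⟩ y ⟨hyB, hyA⟩ hadj
  have h3 := h3conn _ _ hsep'
  have hEq : C ∩ ((A \ C) ∪ B) = C ∩ B := by
    ext x
    simp only [Set.mem_inter_iff, Set.mem_union, Set.mem_diff]
    tauto
  rw [hEq] at h3
  have hsub : C ∩ B ⊆ A ∩ B := fun x hx => ⟨hCA hx.1, hx.2⟩
  have hfin : (A ∩ B).Finite := Set.toFinite _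
  have heq2 : C ∩ B = A ∩ B :=
    Set.eq_of_subset_of_ncard_le hsub (by omega) hfin
  intro s hs
  have : s ∈ C ∩ B := heq2 ▸ hs
  exact this.1

lemma side_connected {V : Type*} [Fintype V] (G : SimpleGraph V)
    (h3conn : ∀ A' B' : Set V, IsSeparation G A' B' → 3 ≤ (A' ∩ B').ncard)
    (A B : Set V) (hsep : IsSeparation G A B) (horder : (A ∩ B).ncard = 3) :
    (G.induce A).Connected := by
  obtain ⟨a0, ha0⟩ := hsep.2.1
  obtain ⟨s, hs⟩ : (A ∩ B).Nonempty := by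
    apply Set.nonempty_of_ncard_ne_zero
    omega
  have hreach : ∀ w (hw : w ∈ A), (G.induce A).Reachable ⟨w, hw⟩ ⟨s, hs.1⟩ := by
    intro w hw
    by_cases hwB : w ∈ B
    · obtain ⟨_, hr1⟩ := key_reach G h3conn A B hsep horder a0 ha0 w ⟨hw, hwB⟩
      obtain ⟨_, hr2⟩ := key_reach G h3conn A B hsep horder a0 ha0 s hs
      exact hr1.trans hr2.symm
    · obtain ⟨_, hr⟩ := key_reach G h3conn A B hsep horder w ⟨hw, hwB⟩ s hs
      exact hr.symm
  have : Nonempty ↥A := ⟨⟨a0, ha0.1⟩⟩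
  exact ⟨fun x y => (hreach x.1 x.2).trans (hreach y.1 y.2).symm⟩

/-- In a 3-connected graph, both sides of a separation of order 3 induce
connected subgraphs. -/
theorem stmt9 {V : Type*} [Fintype V] (G : SimpleGraph V)
    (hcard : 3 < Fintype.card V)
    (h3conn : ∀ A' B' : Set V, IsSeparation G A' B' → 3 ≤ (A' ∩ B').ncard)
    (A B : Set V) (hsep : IsSeparation G A B) (horder : (A ∩ B).ncard = 3) :
    (G.induce A).Connected ∧ (G.induce B).Connected := by
  have hsep' : IsSeparation G B A :=
    ⟨by rw [Set.union_comm]; exact hsep.1, hsep.2.2.1, hsep.2.1,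
      fun b hb a ha hadj => hsep.2.2.2 a ha b hb hadj.symm⟩
  exact ⟨side_connected G h3conn A B hsep horder,
    side_connected G h3conn B A hsep' (by rwa [Set.inter_comm])⟩
end

section
/- Let G be a finite simple 3-connected graph, let (A,B) be a separation of G of order 3, and suppose x is a cut-vertex of the induced subgraph G[B] (i.e. G[B] is connected but G[B ∖ {x}] is disconnected). Then there exists a vertex c ∈ A ∩ B such that x is the unique neighbor of c in G[B]; in particular, c is an isolated vertex of G[B ∖ {x}]. -/
open SimpleGraph

/-- From reachability between distinct vertices, extract a neighbor of the start. -/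
lemma exists_adj_of_reachable {W : Type*} {H : SimpleGraph W} {u v : W}
    (h : H.Reachable u v) (hne : u ≠ v) : ∃ w, H.Adj u w := by
  obtain ⟨p⟩ := h
  cases p with
  | nil => exact absurd rfl hne
  | cons h _ => exact ⟨_, h⟩

/-- Key step: a "component-like" set `C` of `G[B \ {x}]` that meets `A ∩ B` in
at most one vertex must be a singleton contained in `A ∩ B`. -/
lemma helper {V : Type*} [Fintype V] (G : SimpleGraph V)
    (h3conn : ∀ A' B' : Set V, IsSeparation G A' B' → 3 ≤ (A' ∩ B').ncard)
    (A B : Set V) (hsep : IsSeparation G A B) (x : V)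
    (C D : Set V) (hC : C ⊆ B \ {x})
    (hCcl : ∀ a ∈ C, ∀ b ∈ B \ {x}, G.Adj a b → b ∈ C)
    (hCne : C.Nonempty) (hDne : D.Nonempty) (hD : D ⊆ B \ {x})
    (hdisj : Disjoint C D) (hle : (C ∩ (A ∩ B)).ncard ≤ 1) :
    ∃ c, C = {c} ∧ c ∈ A ∩ B := by
  classical
  obtain ⟨hunion, _, _, hedge⟩ := hsep
  have hxC : x ∉ C := fun h => (hC h).2 rfl
  -- First: C ⊆ A ∩ B
  have hCsub : C ⊆ A ∩ B := by
    by_contra hnot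
    obtain ⟨b0, hb0C, hb0S⟩ : ∃ b0 ∈ C, b0 ∉ A ∩ B := by
      simpa [Set.subset_def] using hnot
    -- build a small separation
    set A' : Set V := (C \ (A ∩ B))ᶜ with hA'
    set B' : Set V := C ∪ {x} with hB'
    obtain ⟨d, hdD⟩ := hDne
    have hdC : d ∉ C := fun h => (Set.disjoint_left.mp hdisj h) hdD
    have hdx : d ≠ x := (hD hdD).2
    have hsep' : IsSeparation G A' B' := by
      refine ⟨?_, ⟨d, ?_, ?_⟩, ⟨b0, ?_, ?_⟩, ?_⟩
      · apply Set.eq_univ_of_forall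
        intro y
        by_cases hy : y ∈ C \ (A ∩ B)
        · exact Or.inr (Or.inl hy.1)
        · exact Or.inl hy
      · simp only [hA', Set.mem_compl_iff, Set.mem_diff]
        tauto
      · simp only [hB', Set.mem_union, Set.mem_singleton_iff]
        tauto
      · exact Or.inl hb0C
      · simp only [hA', Set.mem_compl_iff, Set.mem_diff, not_not]
        tauto
      · rintro a ⟨haA', haB'⟩ b ⟨hbB', hbA'⟩ hadj
        simp only [hB', Set.mem_union, Set.mem_singleton_iff, not_or] at haB'
        simp only [hA', Set.mem_compl_iff, Set.mem_diff, not_not] at hbA'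
        obtain ⟨hbC, hbS⟩ := hbA'
        have hbB : b ∈ B := (hC hbC).1
        have hbnA : b ∉ A := fun h => hbS ⟨h, hbB⟩
        by_cases haB : a ∈ B
        · have : a ∈ C := hCcl b hbC a ⟨haB, haB'.2⟩ hadj.symm
          exact haB'.1 this
        · have haA : a ∈ A := by
            have h := Set.eq_univ_iff_forall.mp hunion a
            rcases h with h | h
            · exact h
            · exact absurd h haB
          exact hedge a ⟨haA, haB⟩ b ⟨hbB, hbnA⟩ hadj
    have h3 := h3conn A' B' hsep'
    have hinter : A' ∩ B' = (C ∩ (A ∩ B)) ∪ {x} := by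
      ext y
      simp only [hA', hB', Set.mem_inter_iff, Set.mem_compl_iff, Set.mem_diff,
        Set.mem_union, Set.mem_singleton_iff]
      constructor
      · rintro ⟨h1, h2 | h2⟩
        · left
          refine ⟨h2, ?_⟩
          by_contra hy
          exact h1 ⟨h2, hy⟩
        · exact Or.inr h2
      · rintro (⟨h1, h2⟩ | h1)
        · exact ⟨fun h => h.2 h2, Or.inl h1⟩
        · exact ⟨fun h => hxC (h1 ▸ h.1), Or.inr h1⟩
    rw [hinter] at h3
    have hle2 : ((C ∩ (A ∩ B)) ∪ {x}).ncard ≤ (C ∩ (A ∩ B)).ncard + ({x} : Set V).ncard :=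
      Set.ncard_union_le _ _
    rw [Set.ncard_singleton] at hle2
    omega
  -- Now C = C ∩ (A ∩ B), so ncard C ≤ 1 and C nonempty
  have hCeq : C ∩ (A ∩ B) = C := Set.inter_eq_left.mpr hCsub
  rw [hCeq] at hle
  have hpos : 0 < C.ncard := (Set.ncard_pos (Set.toFinite _)).mpr hCne
  have : C.ncard = 1 := by omega
  obtain ⟨c, hc⟩ := Set.ncard_eq_one.mp this
  exact ⟨c, hc, hCsub (hc ▸ rfl)⟩

/-- In a 3-connected graph with a separation `(A,B)` of order 3, if `x` is a
cut-vertex of `G[B]`, then some `c ∈ A ∩ B` has `x` as its unique neighbor in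
`G[B]`. -/
theorem stmt12 {V : Type*} [Fintype V] (G : SimpleGraph V)
    (hcard : 3 < Fintype.card V)
    (h3conn : ∀ A' B' : Set V, IsSeparation G A' B' → 3 ≤ (A' ∩ B').ncard)
    (A B : Set V) (hsep : IsSeparation G A B) (horder : (A ∩ B).ncard = 3)
    (x : V) (hx : x ∈ B) (hBconn : (G.induce B).Connected)
    (hcut : ¬ (G.induce (B \ {x})).Connected) :
    ∃ c ∈ A ∩ B, G.Adj c x ∧ ∀ w ∈ B, G.Adj c w → w = x := by
  classical
  -- B \ {x} is nonempty
  have hBx_ne : (B \ {x}).Nonempty := by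
    have h1 : 1 < (A ∩ B).ncard := by omega
    obtain ⟨a, b, ha, hb, hab⟩ := (Set.one_lt_ncard_iff (Set.toFinite _)).mp h1
    by_cases hax : a = x
    · exact ⟨b, hb.2, fun h => hab (hax.trans (Set.mem_singleton_iff.mp h).symm)⟩
    · exact ⟨a, ha.2, hax⟩
  have hne : Nonempty ↥(B \ {x}) := hBx_ne.to_subtype
  rw [connected_iff] at hcut
  push_neg at hcut
  have hnp : ¬ (G.induce (B \ {x})).Preconnected := fun hp => isEmpty_iff.mp (hcut hp) hne.some
  unfold SimpleGraph.Preconnected at hnp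
  push_neg at hnp
  obtain ⟨u, v, huv⟩ := hnp
  set H := G.induce (B \ {x}) with hH
  set Comp : ↥(B \ {x}) → Set V :=
    fun w => {z | ∃ hz : z ∈ B \ {x}, H.Reachable w ⟨z, hz⟩} with hComp
  have hCompsub : ∀ w, Comp w ⊆ B \ {x} := fun w z hz => hz.1
  have hCompself : ∀ w, (w : V) ∈ Comp w := by
    intro w
    exact ⟨w.2, by cases w; exact Reachable.refl _⟩
  have hCompcl : ∀ w, ∀ a ∈ Comp w, ∀ b ∈ B \ {x}, G.Adj a b → b ∈ Comp w := by
    rintro w a ⟨ha, hra⟩ b hb hadj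
    refine ⟨hb, hra.trans (Adj.reachable ?_)⟩
    exact hadj
  have key : ∀ w w' : ↥(B \ {x}), ¬ H.Reachable w w' →
      (Comp w ∩ (A ∩ B)).ncard ≤ 1 →
      ∃ c ∈ A ∩ B, G.Adj c x ∧ ∀ y ∈ B, G.Adj c y → y = x := by
    intro w w' hww hle
    have hdisj : Disjoint (Comp w) (Comp w') := by
      rw [Set.disjoint_left]
      rintro z ⟨hz, hr⟩ ⟨hz', hr'⟩
      exact hww (hr.trans hr'.symm)
    obtain ⟨c, hCeq, hcS⟩ := helper G h3conn A B hsep x (Comp w) (Comp w')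
      (hCompsub w) (hCompcl w) ⟨w, hCompself w⟩ ⟨w', hCompself w'⟩ (hCompsub w') hdisj hle
    have hcC : c ∈ Comp w := by rw [hCeq]; rfl
    have hcBx : c ∈ B \ {x} := hCompsub w hcC
    have huniq : ∀ y ∈ B, G.Adj c y → y = x := by
      intro y hy hadj
      by_contra hyx
      have hyC : y ∈ Comp w := hCompcl w c hcC y ⟨hy, hyx⟩ hadj
      rw [hCeq, Set.mem_singleton_iff] at hyC
      rw [hyC] at hadj
      exact G.irrefl hadj
    refine ⟨c, hcS, ?_, huniq⟩
    have hcx : c ≠ x := hcBx.2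
    obtain ⟨ww, hadj⟩ := exists_adj_of_reachable
      (hBconn.preconnected ⟨c, hcBx.1⟩ ⟨x, hx⟩)
      (by simp [Subtype.ext_iff, hcx])
    have hadj' : G.Adj c ww.1 := hadj
    have hwx := huniq ww.1 ww.2 hadj'
    rwa [hwx] at hadj'
  have hdisjuv : Disjoint (Comp u ∩ (A ∩ B)) (Comp v ∩ (A ∩ B)) := by
    have : Disjoint (Comp u) (Comp v) := by
      rw [Set.disjoint_left]
      rintro z ⟨hz, hr⟩ ⟨hz', hr'⟩
      exact huv (hr.trans hr'.symm)
    exact this.mono Set.inter_subset_left Set.inter_subset_left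
  have hsum : (Comp u ∩ (A ∩ B)).ncard + (Comp v ∩ (A ∩ B)).ncard ≤ 3 := by
    rw [← Set.ncard_union_eq hdisjuv]
    calc ((Comp u ∩ (A ∩ B)) ∪ (Comp v ∩ (A ∩ B))).ncard
        ≤ (A ∩ B).ncard := Set.ncard_le_ncard
          (Set.union_subset Set.inter_subset_right Set.inter_subset_right) (Set.toFinite _)
      _ = 3 := horder
  have hcase : (Comp u ∩ (A ∩ B)).ncard ≤ 1 ∨ (Comp v ∩ (A ∩ B)).ncard ≤ 1 := by omega
  rcases hcase with h | h
  · exact key u v huv h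
  · exact key v u (fun h' => huv h'.symm) h
end

section
/- Let G be a finite simple graph, let (A,B) be a separation of G of order 3 with A ∩ B = {c_1, c_2, c_3}, and suppose there are pairwise disjoint sets A_1, A_2, A_3 ⊆ A with c_i, s_i ∈ A_i and G[A_i] connected for each i, where s_1, s_2, s_3 ∈ S, and A_2 is adjacent in G to both A_1 and A_3. If the induced subgraph G[B] contains a K_4-minor rooted at {c_1, c_2, c_3, s_4} for some s_4 ∈ S ∩ (B ∖ A), then G contains an S-rooted K_4-minor. -/
open SimpleGraph

/-- Given a separation `(A,B)` of order 3 with `A ∩ B = {c₁,c₂,c₃}`, disjoint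
connected sets `A₁, A₂, A₃ ⊆ A` with `cᵢ, sᵢ ∈ Aᵢ` and `sᵢ ∈ S`, where `A₂` is
adjacent to `A₁` and `A₃`: if `G[B]` contains a `K₄`-minor rooted at
`{c₁, c₂, c₃, s₄}` for some `s₄ ∈ S ∩ (B ∖ A)`, then `G` has an `S`-rooted
`K₄`-minor. -/
theorem stmt14 {V : Type*} [Fintype V] (G : SimpleGraph V) (S : Set V)
    (A B : Set V) (hsep : IsSeparation G A B)
    (c₁ c₂ c₃ : V) (hAB : A ∩ B = {c₁, c₂, c₃}) (horder : (A ∩ B).ncard = 3)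
    (s₁ s₂ s₃ : V) (hs₁ : s₁ ∈ S) (hs₂ : s₂ ∈ S) (hs₃ : s₃ ∈ S)
    (A₁ A₂ A₃ : Set V) (hA₁ : A₁ ⊆ A) (hA₂ : A₂ ⊆ A) (hA₃ : A₃ ⊆ A)
    (hd12 : Disjoint A₁ A₂) (hd13 : Disjoint A₁ A₃) (hd23 : Disjoint A₂ A₃)
    (hm₁ : c₁ ∈ A₁ ∧ s₁ ∈ A₁) (hm₂ : c₂ ∈ A₂ ∧ s₂ ∈ A₂) (hm₃ : c₃ ∈ A₃ ∧ s₃ ∈ A₃)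
    (hconn₁ : (G.induce A₁).Connected) (hconn₂ : (G.induce A₂).Connected)
    (hconn₃ : (G.induce A₃).Connected)
    (hadj₁ : SetsAdjacent G A₂ A₁) (hadj₃ : SetsAdjacent G A₂ A₃)
    (s₄ : V) (hs₄ : s₄ ∈ S ∩ (B \ A))
    (hminor : ∃ D : Fin 4 → Set V, (∀ i, D i ⊆ B) ∧ IsKMinor G 4 D ∧
      ∀ i, (D i ∩ ({c₁, c₂, c₃, s₄} : Set V)).Nonempty) :
    ∃ Bs : Fin 4 → Set V, IsKMinor G 4 Bs ∧ ∀ i, (Bs i ∩ S).Nonempty := by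
  classical
  obtain ⟨D, hDB, ⟨hne, hdisj, hconnD, hadjD⟩, hroot⟩ := hminor
  obtain ⟨hs₄S, hs₄B, hs₄A⟩ := hs₄
  set cf : Fin 4 → V := ![c₁, c₂, c₃, s₄] with hcf
  set Ef : Fin 4 → Set V := ![A₁, A₂, A₃, {s₄}] with hEf
  have h2 : ∀ j, (Ef j ∩ S).Nonempty := by
    intro j; fin_cases j
    · exact ⟨s₁, hm₁.2, hs₁⟩
    · exact ⟨s₂, hm₂.2, hs₂⟩
    · exact ⟨s₃, hm₃.2, hs₃⟩
    · exact ⟨s₄, rfl, hs₄S⟩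
  have hs4A : ∀ {X : Set V}, X ⊆ A → Disjoint X {s₄} := by
    intro X hX
    rw [Set.disjoint_singleton_right]
    exact fun h => hs₄A (hX h)
  have e1 := hs4A hA₁
  have e2 := hs4A hA₂
  have e3 := hs4A hA₃
  have h3 : ∀ j k, j ≠ k → Disjoint (Ef j) (Ef k) := by
    intro j k hjk
    fin_cases j <;> fin_cases k <;>
      first
        | exact absurd rfl hjk
        | exact hd12 | exact hd13 | exact hd23
        | exact hd12.symm | exact hd13.symm | exact hd23.symm
        | exact e1 | exact e2 | exact e3
        | exact e1.symm | exact e2.symm | exact e3.symm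
  have hA1B : A₁ ∩ B ⊆ {c₁} := by
    intro x hx
    have hm : x ∈ ({c₁, c₂, c₃} : Set V) := hAB ▸ ⟨hA₁ hx.1, hx.2⟩
    simp only [Set.mem_insert_iff, Set.mem_singleton_iff] at hm
    rcases hm with rfl | rfl | rfl
    · rfl
    · exact (Set.disjoint_left.1 hd12 hx.1 hm₂.1).elim
    · exact (Set.disjoint_left.1 hd13 hx.1 hm₃.1).elim
  have hA2B : A₂ ∩ B ⊆ {c₂} := by
    intro x hx
    have hm : x ∈ ({c₁, c₂, c₃} : Set V) := hAB ▸ ⟨hA₂ hx.1, hx.2⟩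
    simp only [Set.mem_insert_iff, Set.mem_singleton_iff] at hm
    rcases hm with rfl | rfl | rfl
    · exact (Set.disjoint_right.1 hd12 hx.1 hm₁.1).elim
    · rfl
    · exact (Set.disjoint_left.1 hd23 hx.1 hm₃.1).elim
  have hA3B : A₃ ∩ B ⊆ {c₃} := by
    intro x hx
    have hm : x ∈ ({c₁, c₂, c₃} : Set V) := hAB ▸ ⟨hA₃ hx.1, hx.2⟩
    simp only [Set.mem_insert_iff, Set.mem_singleton_iff] at hm
    rcases hm with rfl | rfl | rfl
    · exact (Set.disjoint_right.1 hd13 hx.1 hm₁.1).elim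
    · exact (Set.disjoint_right.1 hd23 hx.1 hm₂.1).elim
    · rfl
  have h4 : ∀ j, Ef j ∩ B ⊆ {cf j} := by
    intro j
    fin_cases j
    · exact hA1B
    · exact hA2B
    · exact hA3B
    · exact Set.inter_subset_left
  have h5 : ∀ (j : Fin 4) (X : Set V), cf j ∈ X → (G.induce X).Connected →
      (G.induce (X ∪ Ef j)).Connected := by
    intro j X hcX hX
    fin_cases j
    · exact induce_union_connected hX.preconnected hconn₁.preconnected ⟨c₁, hcX, hm₁.1⟩
    · exact induce_union_connected hX.preconnected hconn₂.preconnected ⟨c₂, hcX, hm₂.1⟩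
    · exact induce_union_connected hX.preconnected hconn₃.preconnected ⟨c₃, hcX, hm₃.1⟩
    · show (G.induce (X ∪ ({s₄} : Set V))).Connected
      have hsX : s₄ ∈ X := hcX
      have hXe : X ∪ ({s₄} : Set V) = X :=
        Set.union_eq_self_of_subset_right (Set.singleton_subset_iff.2 hsX)
      rwa [hXe]
  have hpick : ∀ i, ∃ j, cf j ∈ D i := by
    intro i
    obtain ⟨x, hxD, hx4⟩ := hroot i
    simp only [Set.mem_insert_iff, Set.mem_singleton_iff] at hx4
    rcases hx4 with rfl | rfl | rfl | rfl
    · exact ⟨0, hxD⟩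
    · exact ⟨1, hxD⟩
    · exact ⟨2, hxD⟩
    · exact ⟨3, hxD⟩
  choose f hf using hpick
  have hfinj : Function.Injective f := by
    intro i i' h
    by_contra hne'
    exact Set.disjoint_left.1 (hdisj i i' hne') (hf i) (h ▸ hf i')
  have hDE : ∀ i i', i ≠ i' → Disjoint (D i) (Ef (f i')) := by
    intro i i' hii
    rw [Set.disjoint_left]
    intro x hxD hxE
    have hxc : x = cf (f i') := h4 (f i') ⟨hxE, hDB i hxD⟩
    exact Set.disjoint_left.1 (hdisj i i' hii) hxD (hxc ▸ hf i')
  refine ⟨fun i => D i ∪ Ef (f i), ⟨?_, ?_, ?_, ?_⟩, ?_⟩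
  · intro i
    exact (hne i).mono Set.subset_union_left
  · intro i j hij
    rw [Set.disjoint_union_left, Set.disjoint_union_right, Set.disjoint_union_right]
    exact ⟨⟨hdisj i j hij, hDE i j hij⟩,
      ⟨(hDE j i hij.symm).symm, h3 _ _ fun h => hij (hfinj h)⟩⟩
  · intro i
    exact h5 (f i) (D i) (hf i) (hconnD i)
  · intro i j hij
    obtain ⟨x, hx, y, hy, hxy⟩ := hadjD i j hij
    exact ⟨x, Or.inl hx, y, Or.inl hy, hxy⟩
  · intro i
    obtain ⟨w, hwE, hwS⟩ := h2 (f i)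
    exact ⟨w, Or.inr hwE, hwS⟩
end
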